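/- arXiv:2502.16521 — 3 statements merged into one kernel-verified Lean document; each statement's English description precedes it below -/
import Mathlib

section
/- (i) If −A generates a bounded analytic semigroup on a Banach space X and A has L^1-maximal regularity on ℝ_+, then A has L^1_v-maximal regularity on ℝ_+ for every non-increasing weight v on (0,∞). (ii) If −A generates an analytic semigroup T on a Banach space X, v is a non-decreasing weight on (0,∞) with v(t) → 0 as t → 0+, and there is a constant C such that ∫_0^∞ ‖AT(t)x‖_X v(t+s) dt ≤ C‖x‖_X v(s) for every Lebesgue point s of v and every x ∈ X, then Ax = 0 for all x ∈ D(A). -/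
open MeasureTheory Set Filter ENNReal NNReal

noncomputable section

variable {X : Type*} [NormedAddCommGroup X] [NormedSpace ℂ X] [CompleteSpace X]

/-- A semigroup on a Banach space `X` (in the sense of Arendt–Batty–Hieber–Neubrander):
a strongly continuous map `T : (0,∞) → L(X)` satisfying the semigroup law, bounded
near `0`, and nondegenerate. -/
structure IsSemigroup (T : ℝ → X →L[ℂ] X) : Prop where
  comp : ∀ s t : ℝ, 0 < s → 0 < t → T (s + t) = (T s).comp (T t)
  strongCont : ∀ x : X, ContinuousOn (fun t => T t x) (Ioi (0:ℝ))
  boundedNearZero : ∃ M : ℝ, ∀ t ∈ Ioo (0:ℝ) 1, ‖T t‖ ≤ M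
  nondegenerate : ∀ x : X, (∀ t : ℝ, 0 < t → T t x = 0) → x = 0

/-- `-A` (a closed linear operator with domain `D` and action `A`) is the generator of
the semigroup `T`: for all sufficiently large `λ > ω`, `(λ + A)⁻¹` exists and is given
by the Laplace transform `(λ + A)⁻¹ x = ∫_0^∞ e^{-λ t} T(t) x dt`. -/
structure IsGenerator (T : ℝ → X →L[ℂ] X) (D : Set X) (A : X → X) : Prop where
  isSemigroup : IsSemigroup T
  add_mem : ∀ x ∈ D, ∀ y ∈ D, x + y ∈ D
  smul_mem : ∀ (c : ℂ), ∀ x ∈ D, c • x ∈ D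
  map_add : ∀ x ∈ D, ∀ y ∈ D, A (x + y) = A x + A y
  map_smul : ∀ (c : ℂ), ∀ x ∈ D, A (c • x) = c • A x
  laplace : ∃ ω : ℝ, ∀ lam : ℝ, ω < lam →
    (∀ x : X, IntegrableOn (fun t : ℝ => Real.exp (-lam * t) • T t x) (Ioi 0)) ∧
    (∀ x : X, (∫ t in Ioi (0:ℝ), Real.exp (-lam * t) • T t x) ∈ D) ∧
    (∀ x : X, lam • (∫ t in Ioi (0:ℝ), Real.exp (-lam * t) • T t x)
        + A (∫ t in Ioi (0:ℝ), Real.exp (-lam * t) • T t x) = x) ∧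
    (∀ y ∈ D, (∫ t in Ioi (0:ℝ), Real.exp (-lam * t) • T t (lam • y + A y)) = y)

/-- The open sector of half-angle `ω` around the positive real axis. -/
def Sector (ω : ℝ) : Set ℂ := {z : ℂ | z ≠ 0 ∧ |Complex.arg z| < ω}

/-- `T` extends to a (not necessarily bounded) holomorphic semigroup on a sector
`S_ω = {z ≠ 0 : |arg z| < ω}` for some `ω ∈ (0, π/2]`. -/
structure IsAnalyticSemigroup (T : ℝ → X →L[ℂ] X) : Prop where
  isSemigroup : IsSemigroup T
  analytic : ∃ ω : ℝ, 0 < ω ∧ ω ≤ Real.pi / 2 ∧ ∃ S : ℂ → X →L[ℂ] X,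
    (∀ t : ℝ, 0 < t → S t = T t) ∧
    (∀ x : X, DifferentiableOn ℂ (fun z => S z x) (Sector ω)) ∧
    (∀ z ∈ Sector ω, ∀ w ∈ Sector ω, S (z + w) = (S z).comp (S w))

/-- `T` extends to a bounded holomorphic semigroup on a sector
`S_ω = {z ≠ 0 : |arg z| < ω}` for some `ω ∈ (0, π/2]`. -/
structure IsBoundedAnalyticSemigroup (T : ℝ → X →L[ℂ] X) : Prop where
  isSemigroup : IsSemigroup T
  analytic : ∃ ω : ℝ, 0 < ω ∧ ω ≤ Real.pi / 2 ∧ ∃ S : ℂ → X →L[ℂ] X,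
    (∀ t : ℝ, 0 < t → S t = T t) ∧
    (∀ x : X, DifferentiableOn ℂ (fun z => S z x) (Sector ω)) ∧
    (∃ M : ℝ, ∀ z ∈ Sector ω, ‖S z‖ ≤ M) ∧
    (∀ z ∈ Sector ω, ∀ w ∈ Sector ω, S (z + w) = (S z).comp (S w))

/-- `-A` generates the analytic semigroup `T`.  (For analytic semigroups one always has
`T(t)X ⊆ D(A)` for `t > 0`; this is included so that `A T(t) x` is meaningful.) -/
structure IsGenAnalytic (T : ℝ → X →L[ℂ] X) (D : Set X) (A : X → X) : Prop where
  isGenerator : IsGenerator T D A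
  isAnalytic : IsAnalyticSemigroup T
  mapsTo_domain : ∀ t : ℝ, 0 < t → ∀ x : X, T t x ∈ D

/-- `-A` generates the bounded analytic semigroup `T`.  (For analytic semigroups one
always has `T(t)X ⊆ D(A)` for `t > 0`; this is included so that `A T(t) x` is
meaningful.) -/
structure IsGenBoundedAnalytic (T : ℝ → X →L[ℂ] X) (D : Set X) (A : X → X) : Prop where
  isGenerator : IsGenerator T D A
  isBoundedAnalytic : IsBoundedAnalyticSemigroup T
  mapsTo_domain : ∀ t : ℝ, 0 < t → ∀ x : X, T t x ∈ D

/-- `u` is a strong solution on the time interval `I` (`I = (0,τ)` or `I = (0,∞)`) of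
`u' + A u = f`, `u(0) = x₀`, with a.e. derivative `g`: `u ∈ W^{1,1}_loc` (it is the
indefinite integral of the locally integrable function `g`), `u(t) ∈ D(A)` and
`u'(t) + A u(t) = f(t)` for a.e. `t ∈ I`. -/
structure IsStrongSolutionOn (D : Set X) (A : X → X) (f : ℝ → X) (x₀ : X)
    (I : Set ℝ) (u g : ℝ → X) : Prop where
  init : u 0 = x₀
  locInt : ∀ b ∈ I, IntegrableOn g (Ioc 0 b)
  repr : ∀ t ∈ I, u t = x₀ + ∫ s in Ioc (0:ℝ) t, g s
  mem_domain : ∀ᵐ t ∂(volume.restrict I), u t ∈ D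
  eqn : ∀ᵐ t ∂(volume.restrict I), g t + A (u t) = f t

/-- `A` has (weighted) `L^1_v`-maximal regularity on `ℝ₊`: for every
`f ∈ L^1_v(ℝ₊; X)` there is a unique strong solution `u` of `u' + Au = f`, `u(0) = 0`,
and `‖u'‖_{L^1_v} + ‖Au‖_{L^1_v} ≤ C ‖f‖_{L^1_v}` with `C` independent of `f`. -/
def HasL1MaxRegWeighted (D : Set X) (A : X → X) (v : ℝ → ℝ) : Prop :=
  ∃ C : ℝ, ∀ f : ℝ → X,
    AEStronglyMeasurable f (volume.restrict (Ioi 0)) →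
    IntegrableOn (fun t => ‖f t‖ * v t) (Ioi 0) →
    ∃ u g : ℝ → X, IsStrongSolutionOn D A f 0 (Ioi 0) u g ∧
      (∀ u' g' : ℝ → X, IsStrongSolutionOn D A f 0 (Ioi 0) u' g' →
        ∀ t ∈ Ioi (0:ℝ), u' t = u t) ∧
      IntegrableOn (fun t => ‖g t‖ * v t) (Ioi 0) ∧
      IntegrableOn (fun t => ‖A (u t)‖ * v t) (Ioi 0) ∧
      (∫ t in Ioi (0:ℝ), ‖g t‖ * v t) + (∫ t in Ioi (0:ℝ), ‖A (u t)‖ * v t)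
        ≤ C * ∫ t in Ioi (0:ℝ), ‖f t‖ * v t

/-- `s` is a Lebesgue point of the locally integrable function `v`. -/
def IsLebesguePoint (v : ℝ → ℝ) (s : ℝ) : Prop :=
  Tendsto (fun ε : ℝ => (∫ t in Ioo (s - ε) (s + ε), |v t - v s|) / (2 * ε))
    (nhdsWithin 0 (Ioi 0)) (nhds 0)

set_option linter.unusedSectionVars false
section Helpers

variable {X : Type*} [NormedAddCommGroup X] [NormedSpace ℂ X] [CompleteSpace X]
variable {T : ℝ → X →L[ℂ] X} {D : Set X} {A : X → X}

/-- From an a.e. property on a restricted measure, find a point in any positive-length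
subinterval satisfying it. -/
lemma exists_mem_Ioo_of_ae {P : ℝ → Prop} {S : Set ℝ} (hS : MeasurableSet S)
    (h : ∀ᵐ t ∂(volume.restrict S), P t) {a b : ℝ} (hab : a < b) (hsub : Ioo a b ⊆ S) :
    ∃ s ∈ Ioo a b, P s := by
  by_contra hc
  push_neg at hc
  have h0 : volume.restrict S {t | ¬ P t} = 0 := by
    have := h
    rw [MeasureTheory.ae_iff] at this
    exact this
  rw [Measure.restrict_apply' hS] at h0
  have hsub2 : Ioo a b ⊆ {t | ¬ P t} ∩ S := fun t ht => ⟨hc t ht, hsub ht⟩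
  have : volume (Ioo a b) = 0 := le_antisymm (h0 ▸ measure_mono hsub2) zero_le
  rw [Real.volume_Ioo] at this
  exact absurd this (by simp [hab, sub_pos.2 hab])

lemma IsSemigroup.exists_bound (hsg : IsSemigroup T) (x : X) (b : ℝ) :
    ∃ M : ℝ, ∀ t ∈ Ioc (0:ℝ) b, ‖T t x‖ ≤ M := by
  obtain ⟨M₀, hM₀⟩ := hsg.boundedNearZero
  obtain ⟨M₁, hM₁⟩ := (isCompact_Icc (a := (1:ℝ)/2) (b := b)).exists_bound_of_continuousOn
    ((hsg.strongCont x).mono (fun t ht => lt_of_lt_of_le (by norm_num) ht.1))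
  refine ⟨max (M₀ * ‖x‖) M₁, fun t ht => ?_⟩
  rcases lt_or_ge t (1/2) with h | h
  · refine le_trans ((T t).le_opNorm x) (le_trans ?_ (le_max_left _ _))
    exact mul_le_mul_of_nonneg_right (hM₀ t ⟨ht.1, by linarith⟩) (norm_nonneg x)
  · exact le_trans (hM₁ t ⟨h, ht.2⟩) (le_max_right _ _)

lemma IsSemigroup.integrableOn_Ioc (hsg : IsSemigroup T) (x : X) (b : ℝ) :
    IntegrableOn (fun t => T t x) (Ioc (0:ℝ) b) := by
  obtain ⟨M, hM⟩ := hsg.exists_bound x b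
  refine ⟨((hsg.strongCont x).mono Ioc_subset_Ioi_self).aestronglyMeasurable measurableSet_Ioc, ?_⟩
  exact HasFiniteIntegral.restrict_of_bounded (C := M) (by simp)
    ((ae_restrict_iff' measurableSet_Ioc).2 (Filter.Eventually.of_forall hM))

lemma IsSemigroup.continuousOn_exp_smul (hsg : IsSemigroup T) (lam : ℝ) (x : X) :
    ContinuousOn (fun t : ℝ => Real.exp (-lam * t) • T t x) (Ioi 0) :=
  (Continuous.continuousOn (by continuity)).smul (hsg.strongCont x)

/-- The fundamental facts about a generator, extracted from the Laplace transform
characterization:  `0 ∈ D` with `A 0 = 0`; the semigroup maps `D` to `D` and commutes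
with `A` on `D`; and the fundamental theorem of calculus identity. -/
theorem IsGenerator.facts (hG : IsGenerator T D A) :
    ((0:X) ∈ D ∧ A 0 = 0) ∧
    (∀ x ∈ D, ∀ t : ℝ, 0 < t → T t x ∈ D ∧ A (T t x) = T t (A x)) ∧
    (∀ x ∈ D, ∀ s : ℝ, 0 < s → T s x = x - ∫ r in Ioc (0:ℝ) s, T r (A x)) := by
  obtain ⟨ω, hω⟩ := hG.laplace
  obtain ⟨hInt, hMem, hEq3, hEq4⟩ := hω (max ω 0 + 1) (by simpa using lt_of_le_of_lt (le_max_left ω 0) (lt_add_one _))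
  set lam : ℝ := max ω 0 + 1 with hlamdef
  have hlam : 0 < lam := by positivity
  set R : X → X := fun z => ∫ t in Ioi (0:ℝ), Real.exp (-lam * t) • T t z with hR
  -- R 0 = 0 and basic zero facts
  have hR0 : R 0 = 0 := by simp [hR]
  have h0D : (0:X) ∈ D := by have := hMem 0; rwa [show (∫ t in Ioi (0:ℝ), Real.exp (-lam * t) • T t 0) = 0 by simp] at this
  have hA0 : A 0 = 0 := by
    have := hEq3 0
    rw [show (∫ t in Ioi (0:ℝ), Real.exp (-lam * t) • T t 0) = 0 by simp] at this
    simpa using this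
  -- commutation of T t with R
  have hcomm : ∀ (z : X) (t : ℝ), 0 < t → T t (R z) = R (T t z) := by
    intro z t ht
    have h1 : T t (R z) = ∫ s in Ioi (0:ℝ), T t (Real.exp (-lam * s) • T s z) :=
      (ContinuousLinearMap.integral_comp_comm (T t) (hInt z)).symm
    rw [h1]
    refine setIntegral_congr_fun measurableSet_Ioi (fun s hs => ?_)
    rw [(T t).map_smul_of_tower]
    congr 1
    have e1 : T (t + s) z = T t (T s z) := by rw [hG.isSemigroup.comp t s ht hs]; rfl
    have e2 : T (s + t) z = T s (T t z) := by rw [hG.isSemigroup.comp s t hs ht]; rfl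
    rw [← e1, add_comm, e2]
  -- domain mapping and commutation with A
  have hDfact : ∀ x ∈ D, ∀ t : ℝ, 0 < t → T t x ∈ D ∧ A (T t x) = T t (A x) := by
    intro x hx t ht
    have hx' : R (lam • x + A x) = x := hEq4 x hx
    set z := lam • x + A x with hz
    have h2 : T t x = R (T t z) := by rw [← hx', hcomm z t ht]
    have hTz : T t z = lam • T t x + T t (A x) := by
      rw [hz]; rw [(T t).map_add, (T t).map_smul_of_tower]
    refine ⟨h2 ▸ hMem _, ?_⟩
    have h4 : lam • T t x + A (T t x) = T t z := by rw [h2]; exact hEq3 _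
    exact add_left_cancel (h4.trans hTz)
  refine ⟨⟨h0D, hA0⟩, hDfact, ?_⟩
  -- the fundamental identity
  intro x hx s hs
  have hx' : R (lam • x + A x) = x := hEq4 x hx
  set z := lam • x + A x with hz
  set h : ℝ → X := fun u => Real.exp (-lam * u) • T u z with hh
  have hint : IntegrableOn h (Ioi 0) := hInt z
  have hcont : ContinuousOn h (Ioi 0) := hG.isSemigroup.continuousOn_exp_smul lam z
  set J : ℝ → X := fun r => ∫ u in (0:ℝ)..r, h u with hJdef
  have hJG : ∀ r : ℝ, 0 ≤ r → J r = ∫ u in Ioc (0:ℝ) r, h u := fun r hr =>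
    intervalIntegral.integral_of_le hr
  have hsmulz : ∀ r : ℝ, Real.exp (lam * r) • h r = T r z := by
    intro r
    rw [hh]; simp only
    rw [smul_smul, ← Real.exp_add]
    norm_num
  -- Step A
  have hstepA : ∀ r : ℝ, 0 < r → T r x = Real.exp (lam * r) • (x - J r) := by
    intro r hr
    have h2 : T r x = R (T r z) := by rw [← hx', hcomm z r hr]
    have e1 : R (T r z) = ∫ u in Ioi (0:ℝ), Real.exp (-lam * u) • T (u + r) z := by
      refine setIntegral_congr_fun measurableSet_Ioi (fun u hu => ?_)
      congr 1
      rw [hG.isSemigroup.comp u r hu hr]; rfl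
    have e2 : (∫ u in Ioi (0:ℝ), Real.exp (-lam * u) • T (u + r) z)
        = Real.exp (lam * r) • ∫ u in Ioi (0:ℝ), h (u + r) := by
      rw [← integral_smul]
      refine setIntegral_congr_fun measurableSet_Ioi (fun u hu => ?_)
      rw [hh]; simp only
      rw [smul_smul, ← Real.exp_add]
      congr 2
      ring
    have e3 : (∫ u in Ioi (0:ℝ), h (u + r)) = ∫ u in Ioi r, h u := by
      have key : ∀ u : ℝ, (Ioi (0:ℝ)).indicator (fun u' => h (u' + r)) u
          = (Ioi r).indicator h (u + r) := by
        intro u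
        simp only [Set.indicator_apply, mem_Ioi, lt_add_iff_pos_left]
      rw [← integral_indicator measurableSet_Ioi, ← integral_indicator measurableSet_Ioi]
      calc (∫ u, (Ioi (0:ℝ)).indicator (fun u' => h (u' + r)) u)
          = ∫ u, (Ioi r).indicator h (u + r) := by exact integral_congr_ae (Filter.Eventually.of_forall key)
        _ = ∫ u, (Ioi r).indicator h u := by
            simpa using integral_add_right_eq_self ((Ioi r).indicator h) r
    have hsplit : (∫ u in Ioc (0:ℝ) r, h u) + ∫ u in Ioi r, h u = ∫ u in Ioi (0:ℝ), h u := by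
      have hu : (∫ u in Ioc (0:ℝ) r ∪ Ioi r, h u) = (∫ u in Ioc (0:ℝ) r, h u) + ∫ u in Ioi r, h u :=
        setIntegral_union (disjoint_left.2 fun u hu hu' => absurd hu.2 (not_le.2 hu'))
          measurableSet_Ioi (hint.mono_set Ioc_subset_Ioi_self)
          (hint.mono_set (Ioi_subset_Ioi hr.le))
      rw [Ioc_union_Ioi_eq_Ioi hr.le] at hu
      exact hu.symm
    have hRzx : (∫ u in Ioi (0:ℝ), h u) = x := hx'
    rw [h2, e1, e2, e3]
    rw [hJG r hr.le]
    congr 1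
    rw [← hRzx, ← hsplit]
    abel
  -- Step B : FTC
  set HH : ℝ → X := fun r => Real.exp (lam * r) • (x - J r) with hHH
  set Hd : ℝ → X := fun r => lam • HH r - T r z with hHd
  have hicc : IntegrableOn h (Icc 0 s) := by
    rw [integrableOn_Icc_iff_integrableOn_Ioc]; exact hint.mono_set Ioc_subset_Ioi_self
  have hJcont : ContinuousOn J (Icc 0 s) :=
    (intervalIntegral.continuousOn_primitive hicc).congr fun r hr => hJG r hr.1
  have hHcont : ContinuousOn HH (Icc 0 s) :=
    ((Real.continuous_exp.comp (continuous_const.mul continuous_id)).continuousOn).smul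
      (continuousOn_const.sub hJcont)
  have hderiv : ∀ r ∈ Ioo (0:ℝ) s, HasDerivWithinAt HH (Hd r) (Ioi r) r := by
    intro r hr
    have hJd : HasDerivAt J (h r) r :=
      intervalIntegral.integral_hasDerivAt_right
        ((intervalIntegrable_iff_integrableOn_Ioc_of_le hr.1.le).2
          (hint.mono_set Ioc_subset_Ioi_self))
        (hcont.stronglyMeasurableAtFilter isOpen_Ioi r hr.1)
        (hcont.continuousAt (Ioi_mem_nhds hr.1))
    have hexp : HasDerivAt (fun u : ℝ => Real.exp (lam * u)) (Real.exp (lam * r) * lam) r := by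
      simpa using ((hasDerivAt_id r).const_mul lam).exp
    have hsub : HasDerivAt (fun u => x - J u) (0 - h r) r := (hasDerivAt_const r x).sub hJd
    refine HasDerivAt.hasDerivWithinAt ?_
    have h5 := hexp.smul hsub
    convert h5 using 1
    · rfl
    simp only [hHd, hHH]
    rw [smul_smul, zero_sub, smul_neg, hsmulz r, mul_comm]
    abel
  have hHdint : IntervalIntegrable Hd volume 0 s := by
    have h1 : IntervalIntegrable (fun r => lam • HH r) volume 0 s := by
      apply ContinuousOn.intervalIntegrable
      rw [uIcc_of_le hs.le]
      exact hHcont.const_smul lam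
    have h2 : IntervalIntegrable (fun r => T r z) volume 0 s :=
      (intervalIntegrable_iff_integrableOn_Ioc_of_le hs.le).2 (hG.isSemigroup.integrableOn_Ioc z s)
    exact h1.sub h2
  have hFTC : (∫ r in (0:ℝ)..s, Hd r) = HH s - HH 0 :=
    intervalIntegral.integral_eq_sub_of_hasDeriv_right_of_le hs.le hHcont hderiv hHdint
  have hHH0 : HH 0 = x := by
    simp only [hHH, hJdef]
    rw [intervalIntegral.integral_same]
    simp
  have hHHs : HH s = T s x := (hstepA s hs).symm
  have hTA : ∀ r ∈ Ioc (0:ℝ) s, T r (A x) = -(Hd r) := by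
    intro r hr
    have hAx : A x = z - lam • x := by rw [hz]; abel
    rw [hAx, (T r).map_sub, (T r).map_smul_of_tower]
    simp only [hHd, hHH]
    rw [← hstepA r hr.1]
    abel
  have : (∫ r in Ioc (0:ℝ) s, T r (A x)) = x - T s x := by
    rw [setIntegral_congr_fun measurableSet_Ioc hTA, integral_neg,
      ← intervalIntegral.integral_of_le hs.le, hFTC, hHH0, hHHs]
    abel
  rw [this]
  abel


end Helpers
lemma exists_lebesguePoint_near_zero {v : ℝ → ℝ} (hv : Measurable v)
    (hpos : ∀ t ∈ Ioi (0:ℝ), 0 < v t) (hmono : MonotoneOn v (Ioi 0)) {δ : ℝ} (hδ : 0 < δ) :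
    ∃ s, s ∈ Ioo 0 δ ∧ IsLebesguePoint v s := by
  set w : ℝ → ℝ := (Ioo (0:ℝ) 1).indicator v with hw
  have hwint : Integrable w := by
    rw [hw, integrable_indicator_iff measurableSet_Ioo]
    refine ⟨hv.aestronglyMeasurable.restrict, ?_⟩
    refine HasFiniteIntegral.restrict_of_bounded (C := v 1) (by simp) ?_
    refine (ae_restrict_iff' measurableSet_Ioo).2 (Filter.Eventually.of_forall fun t ht => ?_)
    rw [Real.norm_eq_abs, abs_of_pos (hpos t ht.1)]
    exact hmono (a := t) (b := 1) ht.1 (mem_Ioi.2 one_pos) ht.2.le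
  have hli : LocallyIntegrable w := hwint.locallyIntegrable
  have hae := IsUnifLocDoublingMeasure.ae_tendsto_average_norm_sub (μ := volume) hli 1
  have hmin : (0:ℝ) < min δ 1 := lt_min hδ one_pos
  obtain ⟨s, hs, hsP⟩ := exists_mem_Ioo_of_ae (S := univ) MeasurableSet.univ
    (by simpa [Measure.restrict_univ] using hae) hmin (subset_univ _)
  have hs1 : s < 1 := lt_of_lt_of_le hs.2 (min_le_right _ _)
  have hsδ : s < δ := lt_of_lt_of_le hs.2 (min_le_left _ _)
  refine ⟨s, ⟨hs.1, hsδ⟩, ?_⟩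
  have hTend : Tendsto (fun ε : ℝ => ⨍ y in Metric.closedBall s ε, ‖w y - w s‖)
      (nhdsWithin 0 (Ioi 0)) (nhds 0) := by
    refine hsP (fun _ => s) (fun ε => ε) tendsto_id ?_
    filter_upwards [self_mem_nhdsWithin] with ε (hε : ε ∈ Ioi (0:ℝ))
    exact Metric.mem_closedBall_self (by nlinarith [hε.out])
  have hcong : ∀ᶠ ε in nhdsWithin (0:ℝ) (Ioi 0),
      (⨍ y in Metric.closedBall s ε, ‖w y - w s‖)
        = (∫ t in Ioo (s - ε) (s + ε), |v t - v s|) / (2 * ε) := by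
    have hmem : Ioo (0:ℝ) (min s (1 - s)) ∈ nhdsWithin (0:ℝ) (Ioi 0) :=
Ioo_mem_nhdsGT (lt_min hs.1 (by linarith))
    filter_upwards [hmem] with ε hε
    have hεs : ε < s := lt_of_lt_of_le hε.2 (min_le_left _ _)
    have hεs1 : s + ε < 1 := by have := lt_of_lt_of_le hε.2 (min_le_right _ _); linarith
    have hball : Metric.closedBall s ε = Icc (s - ε) (s + ε) := Real.closedBall_eq_Icc
    have hvol : (volume (Metric.closedBall s ε)).toReal = 2 * ε := by
      rw [Real.volume_closedBall, ENNReal.toReal_ofReal (by linarith [hε.1])]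
    have hint : (∫ t in Ioo (s - ε) (s + ε), ‖w t - w s‖) = ∫ t in Ioo (s - ε) (s + ε), |v t - v s| := by
      refine setIntegral_congr_fun measurableSet_Ioo fun t ht => ?_
      have htm : t ∈ Ioo (0:ℝ) 1 := ⟨by linarith [ht.1, hε.1], by linarith [ht.2]⟩
      rw [hw, Set.indicator_of_mem htm, Set.indicator_of_mem (show s ∈ Ioo (0:ℝ) 1 from ⟨hs.1, hs1⟩) v, Real.norm_eq_abs]
    rw [setAverage_eq, measureReal_def, hvol, hball, integral_Icc_eq_integral_Ioo, hint, smul_eq_mul,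
      div_eq_inv_mul]
  exact (Tendsto.congr' hcong hTend)
/-- Part (ii) of the theorem, as a standalone lemma. -/
lemma part_two {T : ℝ → X →L[ℂ] X} {D : Set X} {A : X → X}
    (hGen : IsGenAnalytic T D A)
    (v : ℝ → ℝ) (hvmeas : Measurable v) (hvpos : ∀ t ∈ Ioi (0:ℝ), 0 < v t)
    (hvmono : MonotoneOn v (Ioi 0)) (hv0 : Tendsto v (nhdsWithin 0 (Ioi 0)) (nhds 0))
    (hCex : ∃ C : ℝ, ∀ s ∈ Ioi (0:ℝ), IsLebesguePoint v s → ∀ x : X,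
      (∫⁻ t in Ioi (0:ℝ), ENNReal.ofReal (‖A (T t x)‖ * v (t + s)))
        ≤ ENNReal.ofReal (C * ‖x‖ * v s)) :
    ∀ x ∈ D, A x = 0 := by
  obtain ⟨C, hC⟩ := hCex
  intro x hxD
  obtain ⟨⟨h0D, hA0⟩, hDfact, _⟩ := hGen.isGenerator.facts
  set L := ∫⁻ t in Ioi (0:ℝ), ENNReal.ofReal (‖T t (A x)‖ * v t) with hLdef
  have hle : ∀ c : ℝ, 0 < c → L ≤ ENNReal.ofReal c := by
    intro c hc
    set K := max (C * ‖x‖) 1 with hK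
    have hK1 : (0:ℝ) < K := lt_of_lt_of_le one_pos (le_max_right _ _)
    have hev : {s : ℝ | v s < c / K} ∈ nhdsWithin (0:ℝ) (Ioi 0) :=
      hv0 (Iio_mem_nhds (by positivity))
    obtain ⟨u, hu, husub⟩ := mem_nhdsGT_iff_exists_Ioo_subset.1 hev
    obtain ⟨s, hsmem, hsleb⟩ := exists_lebesguePoint_near_zero hvmeas hvpos hvmono hu.out
    have hs0 : (0:ℝ) < s := hsmem.1
    have hvs : v s < c / K := husub hsmem
    have h1 : L ≤ ∫⁻ t in Ioi (0:ℝ), ENNReal.ofReal (‖A (T t x)‖ * v (t + s)) := by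
      refine lintegral_mono_ae ((ae_restrict_iff' measurableSet_Ioi).2
        (Filter.Eventually.of_forall fun t ht => ?_))
      have hcomm := (hDfact x hxD t ht.out).2
      rw [← hcomm]
      refine ENNReal.ofReal_le_ofReal (mul_le_mul_of_nonneg_left ?_ (norm_nonneg _))
      exact hvmono (a := t) (b := t + s) ht.out (by simp only [mem_Ioi] at ht ⊢; linarith)
        (by linarith)
    have h2 := hC s hs0 hsleb x
    have h3 : C * ‖x‖ * v s ≤ c := by
      have hvs0 : 0 ≤ v s := (hvpos s hs0).le
      have e1 : C * ‖x‖ * v s ≤ K * v s :=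
        mul_le_mul_of_nonneg_right (le_max_left _ _) hvs0
      have e2 : K * v s ≤ K * (c / K) := mul_le_mul_of_nonneg_left hvs.le hK1.le
      rw [mul_div_cancel₀ _ hK1.ne'] at e2
      linarith
    exact h1.trans (h2.trans (ENNReal.ofReal_le_ofReal h3))
  have hL : L = 0 := by
    by_contra hne
    rcases eq_or_ne L ⊤ with htop | htop
    · have := hle 1 one_pos
      rw [htop] at this
      exact absurd (le_antisymm this le_top).symm (by simp)
    · have hpos : 0 < L.toReal := ENNReal.toReal_pos hne htop
      have hcp : (0:ℝ) < L.toReal / 2 := by linarith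
      have hb := hle _ hcp
      have hlt : ENNReal.ofReal (L.toReal / 2) < L := by
        rw [ENNReal.ofReal_lt_iff_lt_toReal (by linarith) htop]
        linarith
      exact absurd hb hlt.not_ge
  have hmeas2 : ∀ᵐ t ∂(volume.restrict (Ioi (0:ℝ))), T t (A x) = 0 := by
    have hmeasf : AEMeasurable (fun t => ENNReal.ofReal (‖T t (A x)‖ * v t))
        (volume.restrict (Ioi (0:ℝ))) := by
      refine ENNReal.measurable_ofReal.comp_aemeasurable (AEMeasurable.mul ?_ hvmeas.aemeasurable)
      exact (((hGen.isGenerator.isSemigroup.strongCont (A x)).norm).aestronglyMeasurable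
        measurableSet_Ioi).aemeasurable
    have h0 := (lintegral_eq_zero_iff' hmeasf).1 hL
    filter_upwards [h0, self_mem_ae_restrict measurableSet_Ioi] with t ht hmem
    rw [Pi.zero_apply, ENNReal.ofReal_eq_zero] at ht
    have hvt := hvpos t hmem
    have hn : ‖T t (A x)‖ ≤ 0 := by nlinarith [norm_nonneg (T t (A x))]
    exact norm_le_zero_iff.1 hn
  have hall : ∀ t : ℝ, 0 < t → T t (A x) = 0 := by
    intro t ht
    obtain ⟨s, hs, hTs⟩ := exists_mem_Ioo_of_ae measurableSet_Ioi hmeas2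
      (show t / 2 < t by linarith) (fun r hr => lt_trans (by linarith) hr.1)
    have hcomp := hGen.isGenerator.isSemigroup.comp (t - s) s (by linarith [hs.2])
      (lt_trans (by linarith) hs.1)
    rw [show t - s + s = t by ring] at hcomp
    have : T t (A x) = T (t - s) (T s (A x)) := by rw [hcomp]; rfl
    rw [this, hTs, map_zero]
  exact hGen.isGenerator.isSemigroup.nondegenerate (A x) hall
/-- Causality: two strong solutions whose data agree (a.e.) below `s` agree on `(0,s)`. -/
lemma causality {T : ℝ → X →L[ℂ] X} {D : Set X} {A : X → X}
    (hG : IsGenerator T D A)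
    (huniq0 : ∀ u g : ℝ → X, IsStrongSolutionOn D A (fun _ => (0:X)) 0 (Ioi 0) u g →
      ∀ t ∈ Ioi (0:ℝ), u t = 0)
    {f₁ f₂ : ℝ → X} {u₁ g₁ u₂ g₂ : ℝ → X} {s : ℝ} (hs : 0 < s)
    (h₁ : IsStrongSolutionOn D A f₁ 0 (Ioi 0) u₁ g₁)
    (h₂ : IsStrongSolutionOn D A f₂ 0 (Ioi 0) u₂ g₂)
    (hf : ∀ᵐ t ∂(volume.restrict (Ioi (0:ℝ))), t < s → f₁ t = f₂ t) :
    ∀ t ∈ Ioo (0:ℝ) s, u₁ t = u₂ t := by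
  obtain ⟨⟨h0D, hA0⟩, hDfact, hFTC⟩ := hG.facts
  set w : ℝ → X := fun r => u₁ r - u₂ r with hw
  set gw : ℝ → X := fun r => g₁ r - g₂ r with hgw
  have hsubD : ∀ r : ℝ, u₁ r ∈ D → u₂ r ∈ D → w r ∈ D := by
    intro r hm1 hm2
    have : w r = u₁ r + (-1 : ℂ) • u₂ r := by
      rw [hw]; simp only; rw [neg_one_smul]; abel
    rw [this]
    exact hG.add_mem _ hm1 _ (hG.smul_mem _ _ hm2)
  have hgood : ∀ᵐ r ∂(volume.restrict (Ioi (0:ℝ))), u₁ r ∈ D ∧ u₂ r ∈ D ∧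
      (r < s → gw r + A (w r) = 0) := by
    filter_upwards [h₁.mem_domain, h₂.mem_domain, h₁.eqn, h₂.eqn, hf] with r hm1 hm2 he1 he2 hfr
    refine ⟨hm1, hm2, fun hrs => ?_⟩
    have hAsub : A (w r) = A (u₁ r) - A (u₂ r) := by
      have h' : w r = u₁ r + (-1 : ℂ) • u₂ r := by
        rw [hw]; simp only; rw [neg_one_smul]; abel
      rw [h', hG.map_add _ hm1 _ (hG.smul_mem (-1) _ hm2), hG.map_smul (-1) _ hm2,
        neg_one_smul]
      abel
    rw [hgw]; simp only
    rw [hAsub, show g₁ r - g₂ r + (A (u₁ r) - A (u₂ r))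
      = (g₁ r + A (u₁ r)) - (g₂ r + A (u₂ r)) by abel, he1, he2, hfr hrs, sub_self]
  intro t ht
  obtain ⟨s', hs', hgs'⟩ := exists_mem_Ioo_of_ae measurableSet_Ioi hgood ht.2
    (fun r hr => lt_trans ht.1 hr.1)
  have hts' : t < s' := hs'.1
  have hs'0 : 0 < s' := lt_trans ht.1 hs'.1
  have hs's : s' < s := hs'.2
  set y : X := w s' with hy
  have hyD : y ∈ D := hsubD s' hgs'.1 hgs'.2.1
  have hwrepr : ∀ r ∈ Ioi (0:ℝ), w r = ∫ ρ in Ioc (0:ℝ) r, gw ρ := by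
    intro r hr
    rw [hw]; simp only
    rw [h₁.repr r hr, h₂.repr r hr, zero_add, zero_add,
      ← integral_sub (h₁.locInt r hr) (h₂.locInt r hr)]
  set W : ℝ → X := fun r => if r ≤ s' then w r else T (r - s') y with hW
  set GW : ℝ → X := fun r => if r ≤ s' then gw r else -(T (r - s') (A y)) with hGW
  have htail : ∀ b : ℝ, IntegrableOn (fun r => T (r - s') (A y)) (Ioc s' b) := by
    intro b
    rcases le_or_gt b s' with hb | hb
    · rw [Ioc_eq_empty (not_lt.2 hb)]; exact integrableOn_empty
    · have base : IntervalIntegrable (fun ρ => T ρ (A y)) volume 0 (b - s') :=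
        (intervalIntegrable_iff_integrableOn_Ioc_of_le (by linarith)).2
          (hG.isSemigroup.integrableOn_Ioc (A y) (b - s'))
      have h2 := base.comp_sub_right s'
      rw [zero_add, sub_add_cancel] at h2
      exact (intervalIntegrable_iff_integrableOn_Ioc_of_le hb.le).1 h2
  have htailint : ∀ b : ℝ, s' ≤ b →
      (∫ r in Ioc s' b, T (r - s') (A y)) = ∫ ρ in Ioc (0:ℝ) (b - s'), T ρ (A y) := by
    intro b hb
    calc (∫ r in Ioc s' b, T (r - s') (A y))
        = ∫ r in s'..b, T (r - s') (A y) := (intervalIntegral.integral_of_le hb).symm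
      _ = ∫ ρ in (s' - s')..(b - s'), T ρ (A y) :=
          intervalIntegral.integral_comp_sub_right (fun ρ => T ρ (A y)) s'
      _ = ∫ ρ in Ioc (0:ℝ) (b - s'), T ρ (A y) := by
          rw [sub_self]; exact intervalIntegral.integral_of_le (by linarith)
  have hGWint : ∀ b : ℝ, 0 < b → IntegrableOn GW (Ioc 0 b) := by
    intro b hb
    have h1 : IntegrableOn GW (Ioc 0 (min b s')) := by
      refine IntegrableOn.congr_fun
        (IntegrableOn.mono_set ((h₁.locInt b hb).sub (h₂.locInt b hb))
          (Ioc_subset_Ioc_right (min_le_left _ _))) (fun ρ hρ => ?_) measurableSet_Ioc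
      rw [hGW]; simp only
      rw [if_pos (le_trans hρ.2 (min_le_right _ _))]
      rfl
    have h2 : IntegrableOn GW (Ioc (min b s') b) := by
      rcases le_or_gt b s' with hbs | hbs
      · rw [min_eq_left hbs, Ioc_eq_empty (lt_irrefl b)]; exact integrableOn_empty
      · rw [min_eq_right hbs.le]
        refine IntegrableOn.congr_fun (htail b).neg (fun ρ hρ => ?_) measurableSet_Ioc
        rw [hGW]; simp only
        rw [if_neg (not_le.2 hρ.1)]
        rfl
    have := h1.union h2
    rwa [Ioc_union_Ioc_eq_Ioc (le_min hb.le hs'0.le) (min_le_left _ _)] at this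
  have hWsol : IsStrongSolutionOn D A (fun _ => (0:X)) 0 (Ioi 0) W GW := by
    constructor
    · rw [hW]; simp only
      rw [if_pos hs'0.le, hw]; simp only
      rw [h₁.init, h₂.init, sub_zero]
    · exact fun b hb => hGWint b hb
    · intro r hr
      rw [zero_add]
      by_cases hrs' : r ≤ s'
      · have e1 : (∫ ρ in Ioc (0:ℝ) r, GW ρ) = ∫ ρ in Ioc (0:ℝ) r, gw ρ := by
          refine setIntegral_congr_fun measurableSet_Ioc fun ρ hρ => ?_
          rw [hGW]; simp only
          rw [if_pos (le_trans hρ.2 hrs')]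
        rw [e1, hW]; simp only
        rw [if_pos hrs']
        exact hwrepr r hr
      · push_neg at hrs'
        have hsplit : (∫ ρ in Ioc (0:ℝ) r, GW ρ)
            = (∫ ρ in Ioc (0:ℝ) s', GW ρ) + ∫ ρ in Ioc s' r, GW ρ := by
          have hu : (∫ ρ in Ioc (0:ℝ) s' ∪ Ioc s' r, GW ρ)
              = (∫ ρ in Ioc (0:ℝ) s', GW ρ) + ∫ ρ in Ioc s' r, GW ρ :=
            setIntegral_union (disjoint_left.2 fun ρ hρ hρ' => absurd hρ.2 (not_le.2 hρ'.1))
              measurableSet_Ioc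
              ((hGWint r hr).mono_set (Ioc_subset_Ioc_right hrs'.le))
              ((hGWint r hr).mono_set (Ioc_subset_Ioc_left hs'0.le))
          rwa [Ioc_union_Ioc_eq_Ioc hs'0.le hrs'.le] at hu
        have e2 : (∫ ρ in Ioc (0:ℝ) s', GW ρ) = y := by
          rw [show (∫ ρ in Ioc (0:ℝ) s', GW ρ) = ∫ ρ in Ioc (0:ℝ) s', gw ρ from
            setIntegral_congr_fun measurableSet_Ioc fun ρ hρ => by
              rw [hGW]; simp only; rw [if_pos hρ.2]]
          exact (hwrepr s' hs'0).symm
        have e3 : (∫ ρ in Ioc s' r, GW ρ) = -(∫ ρ in Ioc (0:ℝ) (r - s'), T ρ (A y)) := by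
          rw [show (∫ ρ in Ioc s' r, GW ρ) = ∫ ρ in Ioc s' r, -(T (ρ - s') (A y)) from
            setIntegral_congr_fun measurableSet_Ioc fun ρ hρ => by
              rw [hGW]; simp only; rw [if_neg (not_le.2 hρ.1)]]
          rw [integral_neg, htailint r hrs'.le]
        rw [hsplit, e2, e3, hW]; simp only
        rw [if_neg (not_le.2 hrs'), hFTC y hyD (r - s') (by linarith)]
        abel
    · filter_upwards [hgood, self_mem_ae_restrict measurableSet_Ioi] with r hrg hrm
      rw [hW]; simp only
      by_cases hrs' : r ≤ s'
      · rw [if_pos hrs']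
        exact hsubD r hrg.1 hrg.2.1
      · rw [if_neg hrs']
        push_neg at hrs'
        exact (hDfact y hyD (r - s') (by linarith)).1
    · filter_upwards [hgood] with r hrg
      rw [hW, hGW]; simp only
      by_cases hrs' : r ≤ s'
      · rw [if_pos hrs', if_pos hrs']
        exact hrg.2.2 (lt_of_le_of_lt hrs' hs's)
      · rw [if_neg hrs', if_neg hrs']
        push_neg at hrs'
        rw [(hDfact y hyD (r - s') (by linarith)).2]
        abel
  have hWt := huniq0 W GW hWsol t ht.1
  rw [hW] at hWt; simp only at hWt
  rw [if_pos hts'.le, hw] at hWt; simp only at hWt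
  exact sub_eq_zero.1 hWt
lemma part_one {T : ℝ → X →L[ℂ] X} {D : Set X} {A : X → X}
    (hGen : IsGenBoundedAnalytic T D A)
    (hMR : HasL1MaxRegWeighted D A (fun _ => (1:ℝ)))
    (v : ℝ → ℝ) (hvmeas : Measurable v) (hvpos : ∀ t ∈ Ioi (0:ℝ), 0 < v t)
    (hvanti : AntitoneOn v (Ioi 0)) :
    HasL1MaxRegWeighted D A v := by
  have hG := hGen.isGenerator
  obtain ⟨⟨h0D, hA0⟩, hDfact, hFTC⟩ := hG.facts
  obtain ⟨C₀, hC₀⟩ := hMR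
  set C₁ := max C₀ 0 with hC₁def
  have hC₁0 : (0:ℝ) ≤ C₁ := le_max_right _ _
  -- the zero solution
  have hsol0 : IsStrongSolutionOn D A (fun _ => (0:X)) 0 (Ioi 0) (fun _ => 0) (fun _ => 0) := by
    refine ⟨rfl, fun b _ => integrableOn_zero, fun t _ => by simp, ?_, ?_⟩
    · exact Filter.Eventually.of_forall (fun _ => h0D)
    · exact Filter.Eventually.of_forall (fun _ => by simp [hA0])
  -- uniqueness for the zero data
  have huniq0 : ∀ u g : ℝ → X, IsStrongSolutionOn D A (fun _ => (0:X)) 0 (Ioi 0) u g →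
      ∀ t ∈ Ioi (0:ℝ), u t = 0 := by
    intro u g hug t htm
    obtain ⟨u₀, g₀, hsol₀, huq₀, _, _, _⟩ := hC₀ (fun _ => (0:X)) aestronglyMeasurable_const
      (by simpa using (integrableOn_zero : IntegrableOn (fun _ => (0:ℝ)) (Ioi 0) volume))
    have h1 := huq₀ u g hug t htm
    have h2 := huq₀ (fun _ => 0) (fun _ => 0) hsol0 t htm
    rw [h1, ← h2]
  refine ⟨C₁, fun f hfmeas hfint => ?_⟩
  -- truncations are L¹
  set fs : ℝ → ℝ → X := fun s => (Ioc (0:ℝ) s).indicator f with hfs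
  have hfsmeas : ∀ s : ℝ, AEStronglyMeasurable (fs s) (volume.restrict (Ioi 0)) :=
    fun s => hfmeas.indicator measurableSet_Ioc
  have hfsf : ∀ (s t : ℝ), 0 < t → t ≤ s → fs s t = f t := by
    intro s t h0 h1
    rw [hfs]; simp only
    exact Set.indicator_of_mem (show t ∈ Ioc (0:ℝ) s from ⟨h0, h1⟩) f
  have hfnorm_int : ∀ s : ℝ, 0 < s → IntegrableOn (fun t => ‖f t‖) (Ioc 0 s) := by
    intro s hs
    have hvs := hvpos s hs
    refine Integrable.mono' ((hfint.mono_set Ioc_subset_Ioi_self).const_mul (v s)⁻¹)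
      ((hfmeas.mono_measure (Measure.restrict_mono Ioc_subset_Ioi_self le_rfl)).norm) ?_
    refine (ae_restrict_iff' measurableSet_Ioc).2 (Filter.Eventually.of_forall fun t htm => ?_)
    rw [norm_norm, inv_mul_eq_div, le_div_iff₀ hvs]
    exact mul_le_mul_of_nonneg_left (hvanti (a := t) (b := s) htm.1 hs htm.2) (norm_nonneg _)
  have hfsint : ∀ s : ℝ, 0 < s → IntegrableOn (fun t => ‖fs s t‖ * 1) (Ioi 0) := by
    intro s hs
    simp only [mul_one]
    have heq : (fun t => ‖fs s t‖) = (Ioc (0:ℝ) s).indicator (fun t => ‖f t‖) := by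
      funext t; rw [hfs]; simp only
      exact norm_indicator_eq_indicator_norm f t
    rw [heq, IntegrableOn, integrable_indicator_iff measurableSet_Ioc, IntegrableOn,
      Measure.restrict_restrict measurableSet_Ioc, inter_eq_left.2 Ioc_subset_Ioi_self]
    exact hfnorm_int s hs
  -- the solver
  have hex : ∀ s : ℝ, 0 < s → ∃ us gs : ℝ → X,
      IsStrongSolutionOn D A (fs s) 0 (Ioi 0) us gs ∧
      (∀ u' g' : ℝ → X, IsStrongSolutionOn D A (fs s) 0 (Ioi 0) u' g' →
        ∀ t ∈ Ioi (0:ℝ), u' t = us t) ∧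
      IntegrableOn (fun t => ‖gs t‖ * 1) (Ioi 0) ∧
      IntegrableOn (fun t => ‖A (us t)‖ * 1) (Ioi 0) ∧
      (∫ t in Ioi (0:ℝ), ‖gs t‖ * 1) + (∫ t in Ioi (0:ℝ), ‖A (us t)‖ * 1)
        ≤ C₀ * ∫ t in Ioi (0:ℝ), ‖fs s t‖ * 1 :=
    fun s hs => hC₀ (fs s) (hfsmeas s) (hfsint s hs)
  choose U G hsolN huniqN hint1N hint2N hbndN using fun n : ℕ => hex ((n:ℝ)+1) (by positivity)
  -- agreement of the approximants
  have hUagree : ∀ (n m : ℕ) (t : ℝ), 0 < t → t < (n:ℝ) + 1 → t < (m:ℝ) + 1 → U n t = U m t := by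
    intro n m t h0 hn hm
    refine causality hG huniq0 (s := min ((n:ℝ)+1) ((m:ℝ)+1)) (lt_min (by positivity) (by positivity))
      (hsolN n) (hsolN m) ?_ t ⟨h0, lt_min hn hm⟩
    refine (ae_restrict_iff' measurableSet_Ioi).2 (Filter.Eventually.of_forall fun r hr hrs => ?_)
    rw [hfsf _ r hr (le_of_lt (lt_of_lt_of_le hrs (min_le_left _ _))),
      hfsf _ r hr (le_of_lt (lt_of_lt_of_le hrs (min_le_right _ _)))]
  -- glued solution
  set u : ℝ → X := fun t => if ht : 0 < t then U (Nat.floor t) t else 0 with hu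
  set g : ℝ → X := fun t => if ht : 0 < t then G (Nat.floor t) t else 0 with hgdef
  have hfloor : ∀ t : ℝ, t < (Nat.floor t : ℝ) + 1 := fun t => Nat.lt_floor_add_one t
  have huU : ∀ (n : ℕ) (t : ℝ), 0 < t → t < (n:ℝ) + 1 → u t = U n t := by
    intro n t h0 hn
    rw [hu]; simp only; rw [dif_pos h0]
    exact hUagree _ n t h0 (hfloor t) hn
  have heqn : ∀ᵐ t ∂(volume.restrict (Ioi (0:ℝ))), g t + A (u t) = f t := by
    filter_upwards [(ae_all_iff).2 fun m => (hsolN m).eqn, self_mem_ae_restrict measurableSet_Ioi]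
      with t hteq htm
    have h0 : (0:ℝ) < t := htm
    have e1 : g t = G (Nat.floor t) t := by rw [hgdef]; simp only; rw [dif_pos h0]
    have e2 : u t = U (Nat.floor t) t := by rw [hu]; simp only; rw [dif_pos h0]
    rw [e1, e2, hteq (Nat.floor t), hfsf _ _ h0 (hfloor t).le]
  have hgG : ∀ n : ℕ, ∀ᵐ t ∂(volume.restrict (Ioi (0:ℝ))), t < (n:ℝ) + 1 → g t = G n t := by
    intro n
    filter_upwards [heqn, (hsolN n).eqn, self_mem_ae_restrict measurableSet_Ioi]
      with t h1 h2 htm hn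
    have h0 : (0:ℝ) < t := htm
    rw [← huU n t h0 hn, hfsf _ _ h0 hn.le] at h2
    exact add_right_cancel (h1.trans h2.symm)
  have hmemD : ∀ᵐ t ∂(volume.restrict (Ioi (0:ℝ))), u t ∈ D := by
    filter_upwards [(ae_all_iff).2 fun m => (hsolN m).mem_domain,
      self_mem_ae_restrict measurableSet_Ioi] with t h1 h2
    have h0 : (0:ℝ) < t := h2
    rw [hu]; simp only; rw [dif_pos h0]
    exact h1 _
  have husol : IsStrongSolutionOn D A f 0 (Ioi 0) u g := by
    constructor
    · rw [hu]; simp only; rw [dif_neg (lt_irrefl 0)]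
    · intro b hb
      refine Integrable.congr ((hsolN (Nat.floor b)).locInt b hb) ?_
      have h1 := ae_restrict_of_ae_restrict_of_subset (Ioc_subset_Ioi_self : Ioc (0:ℝ) b ⊆ Ioi 0) (hgG (Nat.floor b))
      filter_upwards [h1, self_mem_ae_restrict measurableSet_Ioc] with t htg htm
      exact (htg (lt_of_le_of_lt htm.2 (hfloor b))).symm
    · intro t htm
      have h0 : (0:ℝ) < t := htm
      rw [zero_add, huU (Nat.floor t) t h0 (hfloor t), (hsolN _).repr t htm, zero_add]
      refine setIntegral_congr_ae measurableSet_Ioc ?_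
      have h1 := (ae_restrict_iff' measurableSet_Ioc).1
        (ae_restrict_of_ae_restrict_of_subset (Ioc_subset_Ioi_self : Ioc (0:ℝ) t ⊆ Ioi 0) (hgG (Nat.floor t)))
      filter_upwards [h1] with r hr hrm
      exact (hr hrm (lt_of_le_of_lt hrm.2 (hfloor t))).symm
    · exact hmemD
    · exact heqn
  have huniq : ∀ u' g' : ℝ → X, IsStrongSolutionOn D A f 0 (Ioi 0) u' g' →
      ∀ t ∈ Ioi (0:ℝ), u' t = u t := by
    intro u' g' h' t htm
    have h0 : (0:ℝ) < t := htm
    rw [huU (Nat.floor t) t h0 (hfloor t)]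
    refine causality hG huniq0 (s := (Nat.floor t : ℝ) + 1) (by positivity) h' (hsolN _) ?_
      t ⟨h0, hfloor t⟩
    refine (ae_restrict_iff' measurableSet_Ioi).2 (Filter.Eventually.of_forall fun r hr hrs => ?_)
    exact (hfsf _ r hr hrs.le).symm
  -- ENNReal machinery
  set F : ℝ → ℝ≥0∞ := fun t => ENNReal.ofReal ‖g t‖ + ENNReal.ofReal ‖A (u t)‖ with hF
  set Φ : ℝ → ℝ≥0∞ := fun t => ENNReal.ofReal ‖f t‖ with hΦ
  have hΦmeas : AEMeasurable Φ (volume.restrict (Ioi (0:ℝ))) :=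
    hfmeas.norm.aemeasurable.ennreal_ofReal
  have hEs : ∀ s : ℝ, 0 < s →
      ((∫⁻ t in Ioc (0:ℝ) s, F t) ≤ ENNReal.ofReal C₁ * ∫⁻ t in Ioc (0:ℝ) s, Φ t) ∧
      AEMeasurable F (volume.restrict (Ioc (0:ℝ) s)) := by
    intro s hs
    obtain ⟨us, gs, hsols, huniqs, hint1, hint2, hbnd⟩ := hex s hs
    simp only [mul_one] at hint1 hint2 hbnd
    have huus : ∀ t ∈ Ioo (0:ℝ) s, u t = us t := by
      intro t htm
      have hagree : ∀ᵐ r ∂(volume.restrict (Ioi (0:ℝ))), r < s → f r = fs s r :=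
        (ae_restrict_iff' measurableSet_Ioi).2 (Filter.Eventually.of_forall fun r hr hrs =>
          (hfsf s r hr hrs.le).symm)
      exact causality hG huniq0 hs husol hsols hagree t htm
    have hlt : ∀ᵐ t ∂(volume.restrict (Ioc (0:ℝ) s)), t < s := by
      rw [ae_iff, Measure.restrict_apply' measurableSet_Ioc]
      refine measure_mono_null (fun r hr => ?_) (measure_singleton s)
      have h1 : ¬ r < s := hr.1
      have h2 := hr.2.2
      simp only [mem_singleton_iff]
      linarith [le_antisymm h2 (not_lt.1 h1)]
    have hFs : ∀ᵐ t ∂(volume.restrict (Ioc (0:ℝ) s)),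
        F t = ENNReal.ofReal ‖gs t‖ + ENNReal.ofReal ‖A (us t)‖ := by
      have hae1 := ae_restrict_of_ae_restrict_of_subset
        (Ioc_subset_Ioi_self : Ioc (0:ℝ) s ⊆ Ioi 0) heqn
      have hae2 := ae_restrict_of_ae_restrict_of_subset
        (Ioc_subset_Ioi_self : Ioc (0:ℝ) s ⊆ Ioi 0) hsols.eqn
      filter_upwards [hae1, hae2, hlt, self_mem_ae_restrict measurableSet_Ioc] with t h1 h2 h3 h4
      have h0 : (0:ℝ) < t := h4.1
      have hu_eq : u t = us t := huus t ⟨h0, h3⟩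
      rw [← hu_eq, hfsf s t h0 h4.2] at h2
      have e1 : g t = f t - A (u t) := eq_sub_of_add_eq h1
      have e2 : gs t = f t - A (u t) := eq_sub_of_add_eq h2
      rw [hF]; simp only
      rw [e1, e2, hu_eq]
    have hm1 : AEStronglyMeasurable (fun t => ‖gs t‖) (volume.restrict (Ioi (0:ℝ))) :=
      hint1.aestronglyMeasurable
    have hm2 : AEStronglyMeasurable (fun t => ‖A (us t)‖) (volume.restrict (Ioi (0:ℝ))) :=
      hint2.aestronglyMeasurable
    have hFsm : AEMeasurable (fun t => ENNReal.ofReal ‖gs t‖ + ENNReal.ofReal ‖A (us t)‖)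
        (volume.restrict (Ioc (0:ℝ) s)) := by
      refine AEMeasurable.mono_measure ?_ (Measure.restrict_mono Ioc_subset_Ioi_self le_rfl)
      exact (hm1.aemeasurable.ennreal_ofReal).add (hm2.aemeasurable.ennreal_ofReal)
    refine ⟨?_, (aemeasurable_congr hFs).2 hFsm⟩
    calc (∫⁻ t in Ioc (0:ℝ) s, F t)
        = ∫⁻ t in Ioc (0:ℝ) s, (ENNReal.ofReal ‖gs t‖ + ENNReal.ofReal ‖A (us t)‖) :=
          lintegral_congr_ae hFs
      _ ≤ ∫⁻ t in Ioi (0:ℝ), (ENNReal.ofReal ‖gs t‖ + ENNReal.ofReal ‖A (us t)‖) :=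
          lintegral_mono' (Measure.restrict_mono Ioc_subset_Ioi_self le_rfl) le_rfl
      _ = (∫⁻ t in Ioi (0:ℝ), ENNReal.ofReal ‖gs t‖)
            + ∫⁻ t in Ioi (0:ℝ), ENNReal.ofReal ‖A (us t)‖ :=
          lintegral_add_left' (hm1.aemeasurable.ennreal_ofReal) _
      _ = ENNReal.ofReal ((∫ t in Ioi (0:ℝ), ‖gs t‖) + ∫ t in Ioi (0:ℝ), ‖A (us t)‖) := by
          rw [ENNReal.ofReal_add (integral_nonneg fun t => norm_nonneg _)
            (integral_nonneg fun t => norm_nonneg _),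
            ofReal_integral_eq_lintegral_ofReal hint1
              (Filter.Eventually.of_forall fun t => norm_nonneg _),
            ofReal_integral_eq_lintegral_ofReal hint2
              (Filter.Eventually.of_forall fun t => norm_nonneg _)]
      _ ≤ ENNReal.ofReal (C₁ * ∫ t in Ioi (0:ℝ), ‖fs s t‖) := by
          refine ENNReal.ofReal_le_ofReal (hbnd.trans ?_)
          exact mul_le_mul_of_nonneg_right (le_max_left _ _)
            (integral_nonneg fun t => norm_nonneg _)
      _ = ENNReal.ofReal C₁ * ENNReal.ofReal (∫ t in Ioi (0:ℝ), ‖fs s t‖) :=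
          ENNReal.ofReal_mul hC₁0
      _ = ENNReal.ofReal C₁ * ∫⁻ t in Ioi (0:ℝ), ENNReal.ofReal ‖fs s t‖ := by
          have hi : Integrable (fun t => ‖fs s t‖) (volume.restrict (Ioi (0:ℝ))) := by
            have := hfsint s hs; simp only [mul_one] at this; exact this
          rw [ofReal_integral_eq_lintegral_ofReal hi
            (Filter.Eventually.of_forall fun t => norm_nonneg _)]
      _ = ENNReal.ofReal C₁ * ∫⁻ t in Ioc (0:ℝ) s, Φ t := by
          congr 1
          have e : ∀ t : ℝ, ENNReal.ofReal ‖fs s t‖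
              = (Ioc (0:ℝ) s).indicator (fun r => ENNReal.ofReal ‖f r‖) t := by
            intro t
            rw [hfs]; simp only [Set.indicator_apply]
            split
            · rfl
            · simp
          rw [lintegral_congr e, lintegral_indicator measurableSet_Ioc,
            Measure.restrict_restrict measurableSet_Ioc,
            inter_eq_left.2 Ioc_subset_Ioi_self]
  -- global bound
  have hIoiU : Ioi (0:ℝ) = ⋃ n : ℕ, Ioc (0:ℝ) ((n:ℝ)+1) := by
    ext t
    simp only [mem_Ioi, mem_iUnion, mem_Ioc]
    constructor
    · intro h0
      obtain ⟨n, hn⟩ := exists_nat_ge t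
      exact ⟨n, h0, hn.trans (by linarith)⟩
    · rintro ⟨n, h0, _⟩; exact h0
  have hrr : ∀ s : Set ℝ, MeasurableSet s → s ⊆ Ioi (0:ℝ) →
      (volume.restrict (Ioi (0:ℝ))).restrict s = volume.restrict s := by
    intro s hsm hsub
    rw [Measure.restrict_restrict hsm, inter_eq_left.2 hsub]
  have hFaem : ∀ n : ℕ, AEMeasurable ((Ioc (0:ℝ) ((n:ℝ)+1)).indicator F)
      (volume.restrict (Ioi (0:ℝ))) := by
    intro n
    rw [aemeasurable_indicator_iff measurableSet_Ioc, hrr _ measurableSet_Ioc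
      Ioc_subset_Ioi_self]
    exact (hEs ((n:ℝ)+1) (by positivity)).2
  have hFsup : ∀ t ∈ Ioi (0:ℝ), (⨆ n : ℕ, (Ioc (0:ℝ) ((n:ℝ)+1)).indicator F t) = F t := by
    intro t htm
    refine le_antisymm (iSup_le fun n => ?_) ?_
    · exact Set.indicator_le_self _ _ t
    · refine le_iSup_of_le (Nat.floor t) ?_
      rw [Set.indicator_of_mem (show t ∈ Ioc (0:ℝ) ((Nat.floor t:ℝ)+1) from ⟨htm, (hfloor t).le⟩)]
  have hglob : (∫⁻ t in Ioi (0:ℝ), F t) ≤ ENNReal.ofReal C₁ * ∫⁻ t in Ioi (0:ℝ), Φ t := by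
    have hmono : ∀ᵐ t ∂(volume.restrict (Ioi (0:ℝ))),
        Monotone fun n : ℕ => (Ioc (0:ℝ) ((n:ℝ)+1)).indicator F t := by
      refine Filter.Eventually.of_forall fun t n m hnm => ?_
      refine Set.indicator_le_indicator_of_subset (Ioc_subset_Ioc_right ?_)
        (fun r => zero_le) t
      have hc : (n:ℝ) ≤ m := Nat.cast_le.2 hnm
      linarith
    have e1 : (∫⁻ t in Ioi (0:ℝ), F t)
        = ⨆ n : ℕ, ∫⁻ t in Ioi (0:ℝ), (Ioc (0:ℝ) ((n:ℝ)+1)).indicator F t := by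
      rw [← lintegral_iSup' hFaem hmono]
      refine lintegral_congr_ae ((ae_restrict_iff' measurableSet_Ioi).2
        (Filter.Eventually.of_forall fun t htm => (hFsup t htm).symm))
    rw [e1]
    refine iSup_le fun n => ?_
    have e2 : (∫⁻ t in Ioi (0:ℝ), (Ioc (0:ℝ) ((n:ℝ)+1)).indicator F t)
        = ∫⁻ t in Ioc (0:ℝ) ((n:ℝ)+1), F t := by
      rw [lintegral_indicator measurableSet_Ioc, hrr _ measurableSet_Ioc Ioc_subset_Ioi_self]
    rw [e2]
    refine ((hEs ((n:ℝ)+1) (by positivity)).1).trans ?_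
    exact mul_le_mul_right (lintegral_mono' (Measure.restrict_mono Ioc_subset_Ioi_self le_rfl)
      le_rfl) _
  -- measurable representatives
  have hFmeasIoi : AEMeasurable F (volume.restrict (Ioi (0:ℝ))) := by
    have : AEMeasurable (fun t => ⨆ n : ℕ, (Ioc (0:ℝ) ((n:ℝ)+1)).indicator F t)
        (volume.restrict (Ioi (0:ℝ))) := AEMeasurable.iSup hFaem
    refine this.congr ?_
    exact (ae_restrict_iff' measurableSet_Ioi).2
      (Filter.Eventually.of_forall fun t htm => hFsup t htm)
  obtain ⟨F', hF'meas, hF'eq⟩ := hFmeasIoi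
  obtain ⟨Φ', hΦ'meas, hΦ'eq⟩ := hΦmeas
  have hcongrF : ∀ s : Set ℝ, MeasurableSet s → s ⊆ Ioi (0:ℝ) →
      (∫⁻ t in s, F' t) = ∫⁻ t in s, F t :=
    fun s hsm hsub => (lintegral_congr_ae
      (ae_restrict_of_ae_restrict_of_subset hsub hF'eq)).symm
  have hcongrΦ : ∀ s : Set ℝ, MeasurableSet s → s ⊆ Ioi (0:ℝ) →
      (∫⁻ t in s, Φ' t) = ∫⁻ t in s, Φ t :=
    fun s hsm hsub => (lintegral_congr_ae
      (ae_restrict_of_ae_restrict_of_subset hsub hΦ'eq)).symm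
  -- layer-cake rewriting
  have hrw : ∀ H : ℝ → ℝ≥0∞, Measurable H →
      (∫⁻ t in Ioi (0:ℝ), H t * ENNReal.ofReal (v t))
        = ∫⁻ lam in Ioi (0:ℝ), ∫⁻ t in ({r | lam < v r} ∩ Ioi 0), H t := by
    intro H hH
    have e1 : (∫⁻ t in Ioi (0:ℝ), H t * ENNReal.ofReal (v t))
        = ∫⁻ t in Ioi (0:ℝ), ∫⁻ lam in Ioi (0:ℝ),
            H t * (Iio (v t)).indicator (fun _ => (1:ℝ≥0∞)) lam := by
      refine lintegral_congr_ae ((ae_restrict_iff' measurableSet_Ioi).2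
        (Filter.Eventually.of_forall fun t htm => ?_))
      have hc : (∫⁻ lam in Ioi (0:ℝ), H t * (Iio (v t)).indicator (fun _ => (1:ℝ≥0∞)) lam)
          = H t * ∫⁻ lam in Ioi (0:ℝ), (Iio (v t)).indicator (fun _ => (1:ℝ≥0∞)) lam :=
        lintegral_const_mul (H t) (measurable_const.indicator measurableSet_Iio)
      refine Eq.symm (hc.trans ?_)
      rw [lintegral_indicator measurableSet_Iio, setLIntegral_one,
        Measure.restrict_apply measurableSet_Iio, Iio_inter_Ioi, Real.volume_Ioo, sub_zero]
    have hunc : AEMeasurable (Function.uncurry fun t lam =>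
        H t * (Iio (v t)).indicator (fun _ => (1:ℝ≥0∞)) lam)
        ((volume.restrict (Ioi (0:ℝ))).prod (volume.restrict (Ioi (0:ℝ)))) := by
      have e : (Function.uncurry fun t lam =>
          H t * (Iio (v t)).indicator (fun _ => (1:ℝ≥0∞)) lam)
          = fun p : ℝ × ℝ => H p.1 * ({q : ℝ × ℝ | q.2 < v q.1}).indicator (fun _ => 1) p := by
        funext p
        simp only [Function.uncurry, Set.indicator_apply, mem_Iio, mem_setOf_eq]
      rw [e]
      exact ((hH.comp measurable_fst).mul (measurable_const.indicator
        (measurableSet_lt measurable_snd (hvmeas.comp measurable_fst)))).aemeasurable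
    have e3 : ∀ lam : ℝ, (∫⁻ t in Ioi (0:ℝ),
        H t * (Iio (v t)).indicator (fun _ => (1:ℝ≥0∞)) lam)
        = ∫⁻ t in ({r | lam < v r} ∩ Ioi 0), H t := by
      intro lam
      have e : ∀ t : ℝ, H t * (Iio (v t)).indicator (fun _ => (1:ℝ≥0∞)) lam
          = ({r : ℝ | lam < v r}).indicator H t := by
        intro t
        simp only [Set.indicator_apply, mem_Iio, mem_setOf_eq]
        split <;> simp
      have hms : MeasurableSet {r : ℝ | lam < v r} := hvmeas measurableSet_Ioi
      rw [lintegral_congr e, lintegral_indicator hms, Measure.restrict_restrict hms]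
    rw [e1, lintegral_lintegral_swap hunc]
    exact lintegral_congr fun lam => e3 lam
  -- per-lambda estimate
  have hperlam : ∀ lam : ℝ, (∫⁻ t in ({r | lam < v r} ∩ Ioi 0), F' t)
      ≤ ENNReal.ofReal C₁ * ∫⁻ t in ({r | lam < v r} ∩ Ioi 0), Φ' t := by
    intro lam
    set E := {r : ℝ | lam < v r} ∩ Ioi 0 with hE
    have hEmeas : MeasurableSet E := (hvmeas measurableSet_Ioi).inter measurableSet_Ioi
    have hEsub : E ⊆ Ioi 0 := inter_subset_right
    have hinit : ∀ r ∈ E, ∀ r', 0 < r' → r' ≤ r → r' ∈ E := by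
      intro r hr r' h0 hle
      exact ⟨lt_of_lt_of_le hr.1 (hvanti (a := r') (b := r) h0 hr.2 hle), h0⟩
    rcases eq_empty_or_nonempty E with hEe | hEne
    · rw [hEe]; simp [Measure.restrict_empty]
    by_cases hbd : BddAbove E
    · set b := sSup E with hb
      have hbmem_bound : ∀ r ∈ E, r ≤ b := fun r hr => le_csSup hbd hr
      obtain ⟨e₀, he₀⟩ := id hEne
      have hb0 : 0 < b := lt_of_lt_of_le he₀.2 (hbmem_bound _ he₀)
      have hsub1 : E ⊆ Ioc 0 b := fun r hr => ⟨hr.2, hbmem_bound r hr⟩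
      have hsub2 : Ioo 0 b ⊆ E := by
        intro r hr
        obtain ⟨e, he, hre⟩ := exists_lt_of_lt_csSup hEne hr.2
        exact hinit e he r hr.1 hre.le
      calc (∫⁻ t in E, F' t) ≤ ∫⁻ t in Ioc 0 b, F' t :=
            lintegral_mono' (Measure.restrict_mono hsub1 le_rfl) le_rfl
        _ = ∫⁻ t in Ioc 0 b, F t := hcongrF _ measurableSet_Ioc Ioc_subset_Ioi_self
        _ ≤ ENNReal.ofReal C₁ * ∫⁻ t in Ioc 0 b, Φ t := (hEs b hb0).1
        _ = ENNReal.ofReal C₁ * ∫⁻ t in Ioo 0 b, Φ t := by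
            rw [Measure.restrict_congr_set Ioo_ae_eq_Ioc]
        _ = ENNReal.ofReal C₁ * ∫⁻ t in Ioo 0 b, Φ' t := by
            rw [hcongrΦ _ measurableSet_Ioo Ioo_subset_Ioi_self]
        _ ≤ ENNReal.ofReal C₁ * ∫⁻ t in E, Φ' t :=
            mul_le_mul_right (lintegral_mono' (Measure.restrict_mono hsub2 le_rfl) le_rfl) _
    · have hEeq : E = Ioi 0 := by
        refine subset_antisymm hEsub fun r hr => ?_
        obtain ⟨e, he, hre⟩ := not_bddAbove_iff.1 hbd r
        exact hinit e he r hr hre.le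
      rw [hEeq]
      calc (∫⁻ t in Ioi (0:ℝ), F' t) = ∫⁻ t in Ioi (0:ℝ), F t :=
            hcongrF _ measurableSet_Ioi (fun r hr => hr)
        _ ≤ ENNReal.ofReal C₁ * ∫⁻ t in Ioi (0:ℝ), Φ t := hglob
        _ = ENNReal.ofReal C₁ * ∫⁻ t in Ioi (0:ℝ), Φ' t := by
            rw [hcongrΦ _ measurableSet_Ioi (fun r hr => hr)]
  -- layer-cake conclusion
  have hTL : (∫⁻ t in Ioi (0:ℝ), F t * ENNReal.ofReal (v t))
      ≤ ENNReal.ofReal C₁ * ∫⁻ t in Ioi (0:ℝ), Φ t * ENNReal.ofReal (v t) := by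
    have eF : (∫⁻ t in Ioi (0:ℝ), F t * ENNReal.ofReal (v t))
        = ∫⁻ t in Ioi (0:ℝ), F' t * ENNReal.ofReal (v t) := by
      refine lintegral_congr_ae ?_
      filter_upwards [hF'eq] with t ht
      rw [ht]
    have eΦ : (∫⁻ t in Ioi (0:ℝ), Φ t * ENNReal.ofReal (v t))
        = ∫⁻ t in Ioi (0:ℝ), Φ' t * ENNReal.ofReal (v t) := by
      refine lintegral_congr_ae ?_
      filter_upwards [hΦ'eq] with t ht
      rw [ht]
    rw [eF, eΦ, hrw F' hF'meas, hrw Φ' hΦ'meas]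
    calc (∫⁻ lam in Ioi (0:ℝ), ∫⁻ t in ({r | lam < v r} ∩ Ioi 0), F' t)
        ≤ ∫⁻ lam in Ioi (0:ℝ), ENNReal.ofReal C₁ * ∫⁻ t in ({r | lam < v r} ∩ Ioi 0), Φ' t :=
          lintegral_mono fun lam => hperlam lam
      _ = ENNReal.ofReal C₁ * ∫⁻ lam in Ioi (0:ℝ), ∫⁻ t in ({r | lam < v r} ∩ Ioi 0), Φ' t :=
          lintegral_const_mul' _ _ ENNReal.ofReal_ne_top
  -- convert to Bochner statements
  have hΦv : (∫⁻ t in Ioi (0:ℝ), Φ t * ENNReal.ofReal (v t))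
      = ENNReal.ofReal (∫ t in Ioi (0:ℝ), ‖f t‖ * v t) := by
    rw [ofReal_integral_eq_lintegral_ofReal hfint ((ae_restrict_iff' measurableSet_Ioi).2
      (Filter.Eventually.of_forall fun t htm => mul_nonneg (norm_nonneg _) (hvpos t htm).le))]
    refine lintegral_congr fun t => ?_
    rw [hΦ]; simp only
    rw [ENNReal.ofReal_mul (norm_nonneg _)]
  have hfv_nonneg : (0:ℝ) ≤ ∫ t in Ioi (0:ℝ), ‖f t‖ * v t := by
    refine integral_nonneg_of_ae ((ae_restrict_iff' measurableSet_Ioi).2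
      (Filter.Eventually.of_forall fun t htm => mul_nonneg (norm_nonneg _) (hvpos t htm).le))
  have hTLfin : (∫⁻ t in Ioi (0:ℝ), F t * ENNReal.ofReal (v t)) < ⊤ := by
    refine lt_of_le_of_lt hTL ?_
    rw [hΦv]
    exact ENNReal.mul_lt_top ENNReal.ofReal_lt_top ENNReal.ofReal_lt_top
  -- measurability of g and ‖A ∘ u‖
  have hgmeas : AEStronglyMeasurable g (volume.restrict (Ioi (0:ℝ))) := by
    rw [hIoiU]
    exact aestronglyMeasurable_iUnion_iff.2 fun n =>
      (husol.locInt ((n:ℝ)+1) (mem_Ioi.2 (by positivity))).aestronglyMeasurable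
  have hAu_ae : ∀ n : ℕ, (fun t => ‖A (u t)‖)
      =ᵐ[volume.restrict (Ioc (0:ℝ) ((n:ℝ)+1))] (fun t => ‖A (U n t)‖) := by
    intro n
    have hne : ∀ᵐ t ∂(volume.restrict (Ioc (0:ℝ) ((n:ℝ)+1))), t ≠ (n:ℝ)+1 := by
      rw [ae_iff, Measure.restrict_apply' measurableSet_Ioc]
      refine measure_mono_null (fun r hr => ?_) (measure_singleton ((n:ℝ)+1))
      have := hr.1
      simp only [mem_setOf_eq, not_not] at this
      simpa using this
    filter_upwards [hne, self_mem_ae_restrict measurableSet_Ioc] with t h1 h2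
    rw [huU n t h2.1 (lt_of_le_of_ne h2.2 h1)]
  have hAumeas : AEStronglyMeasurable (fun t => ‖A (u t)‖) (volume.restrict (Ioi (0:ℝ))) := by
    rw [hIoiU]
    refine aestronglyMeasurable_iUnion_iff.2 fun n => ?_
    refine AEStronglyMeasurable.congr ?_ (hAu_ae n).symm
    have h1 := (hint2N n).aestronglyMeasurable
    simp only [mul_one] at h1
    exact h1.mono_measure (Measure.restrict_mono Ioc_subset_Ioi_self le_rfl)
  have hvmeas' : AEStronglyMeasurable v (volume.restrict (Ioi (0:ℝ))) :=
    hvmeas.aestronglyMeasurable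
  -- integrability of the two weighted functions
  have hgv_meas : AEStronglyMeasurable (fun t => ‖g t‖ * v t) (volume.restrict (Ioi (0:ℝ))) :=
    hgmeas.norm.mul hvmeas'
  have hAuv_meas : AEStronglyMeasurable (fun t => ‖A (u t)‖ * v t)
      (volume.restrict (Ioi (0:ℝ))) := hAumeas.mul hvmeas'
  have hgv_int : IntegrableOn (fun t => ‖g t‖ * v t) (Ioi 0) := by
    refine ⟨hgv_meas, ?_⟩
    rw [hasFiniteIntegral_iff_ofReal ((ae_restrict_iff' measurableSet_Ioi).2
      (Filter.Eventually.of_forall fun t htm => mul_nonneg (norm_nonneg _) (hvpos t htm).le))]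
    refine lt_of_le_of_lt ?_ hTLfin
    refine lintegral_mono fun t => ?_
    rw [ENNReal.ofReal_mul (norm_nonneg _)]
    refine mul_le_mul_left ?_ _
    rw [hF]; simp only
    exact self_le_add_right _ _
  have hAuv_int : IntegrableOn (fun t => ‖A (u t)‖ * v t) (Ioi 0) := by
    refine ⟨hAuv_meas, ?_⟩
    rw [hasFiniteIntegral_iff_ofReal ((ae_restrict_iff' measurableSet_Ioi).2
      (Filter.Eventually.of_forall fun t htm => mul_nonneg (norm_nonneg _) (hvpos t htm).le))]
    refine lt_of_le_of_lt ?_ hTLfin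
    refine lintegral_mono fun t => ?_
    rw [ENNReal.ofReal_mul (norm_nonneg _)]
    refine mul_le_mul_left ?_ _
    rw [hF]; simp only
    exact self_le_add_left _ _
  refine ⟨u, g, husol, huniq, hgv_int, hAuv_int, ?_⟩
  -- final inequality
  have hsum : ENNReal.ofReal ((∫ t in Ioi (0:ℝ), ‖g t‖ * v t)
      + ∫ t in Ioi (0:ℝ), ‖A (u t)‖ * v t)
      = ∫⁻ t in Ioi (0:ℝ), F t * ENNReal.ofReal (v t) := by
    have nn1 : (0:ℝ) ≤ ∫ t in Ioi (0:ℝ), ‖g t‖ * v t :=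
      integral_nonneg_of_ae ((ae_restrict_iff' measurableSet_Ioi).2
        (Filter.Eventually.of_forall fun t htm => mul_nonneg (norm_nonneg _) (hvpos t htm).le))
    have nn2 : (0:ℝ) ≤ ∫ t in Ioi (0:ℝ), ‖A (u t)‖ * v t :=
      integral_nonneg_of_ae ((ae_restrict_iff' measurableSet_Ioi).2
        (Filter.Eventually.of_forall fun t htm => mul_nonneg (norm_nonneg _) (hvpos t htm).le))
    have hadd : (∫⁻ t in Ioi (0:ℝ), ENNReal.ofReal (‖g t‖ * v t))
        + (∫⁻ t in Ioi (0:ℝ), ENNReal.ofReal (‖A (u t)‖ * v t))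
        = ∫⁻ t in Ioi (0:ℝ), F t * ENNReal.ofReal (v t) := by
      rw [← lintegral_add_left' (hgv_meas.aemeasurable.ennreal_ofReal) _]
      refine lintegral_congr fun t => ?_
      rw [hF]; simp only
      rw [ENNReal.ofReal_mul (norm_nonneg _), ENNReal.ofReal_mul (norm_nonneg _), add_mul]
    rw [ENNReal.ofReal_add nn1 nn2,
      ofReal_integral_eq_lintegral_ofReal hgv_int ((ae_restrict_iff' measurableSet_Ioi).2
        (Filter.Eventually.of_forall fun t htm => mul_nonneg (norm_nonneg _) (hvpos t htm).le)),
      ofReal_integral_eq_lintegral_ofReal hAuv_int ((ae_restrict_iff' measurableSet_Ioi).2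
        (Filter.Eventually.of_forall fun t htm => mul_nonneg (norm_nonneg _) (hvpos t htm).le))]
    exact hadd
  have hfinal : ENNReal.ofReal ((∫ t in Ioi (0:ℝ), ‖g t‖ * v t)
      + ∫ t in Ioi (0:ℝ), ‖A (u t)‖ * v t)
      ≤ ENNReal.ofReal (C₁ * ∫ t in Ioi (0:ℝ), ‖f t‖ * v t) := by
    rw [hsum, ENNReal.ofReal_mul hC₁0, ← hΦv]
    exact hTL
  exact (ENNReal.ofReal_le_ofReal_iff (mul_nonneg hC₁0 hfv_nonneg)).1 hfinal
/-- Corollary 2.8 of the paper.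
(i) If `-A` generates a bounded analytic semigroup on a Banach space `X` and `A` has
`L^1`-maximal regularity on `ℝ₊`, then `A` has `L^1_v`-maximal regularity on `ℝ₊` for
every non-increasing weight `v` on `(0,∞)`.
(ii) If `-A` generates an analytic semigroup `T` on `X`, `v` is a non-decreasing weight
on `(0,∞)` with `v(t) → 0` as `t → 0⁺`, and there is a constant `C` with
`∫_0^∞ ‖A T(t) x‖ v(t+s) dt ≤ C ‖x‖ v(s)` for every Lebesgue point `s` of `v` and every
`x ∈ X`, then `A x = 0` for all `x ∈ D(A)`. -/
theorem statement3 :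
    (∀ (T : ℝ → X →L[ℂ] X) (D : Set X) (A : X → X),
      IsGenBoundedAnalytic T D A →
      HasL1MaxRegWeighted D A (fun _ => (1:ℝ)) →
      ∀ v : ℝ → ℝ, Measurable v → (∀ t ∈ Ioi (0:ℝ), 0 < v t) →
        AntitoneOn v (Ioi 0) →
        HasL1MaxRegWeighted D A v) ∧
    (∀ (T : ℝ → X →L[ℂ] X) (D : Set X) (A : X → X),
      IsGenAnalytic T D A →
      ∀ v : ℝ → ℝ, Measurable v → (∀ t ∈ Ioi (0:ℝ), 0 < v t) →
        MonotoneOn v (Ioi 0) →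
        Tendsto v (nhdsWithin 0 (Ioi 0)) (nhds 0) →
        (∃ C : ℝ, ∀ s ∈ Ioi (0:ℝ), IsLebesguePoint v s → ∀ x : X,
          (∫⁻ t in Ioi (0:ℝ), ENNReal.ofReal (‖A (T t x)‖ * v (t + s)))
            ≤ ENNReal.ofReal (C * ‖x‖ * v s)) →
        ∀ x ∈ D, A x = 0) := by
  constructor
  · intro T D A hGen hMR v hv hvpos hvanti
    exact part_one hGen hMR v hv hvpos hvanti
  · intro T D A hGen v hv hvpos hvmono hv0 hC x hx
    exact part_two hGen v hv hvpos hvmono hv0 hC x hx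
end
end

section
/- For any quasi-concave function φ : (0,∞) → (0,∞): (i) there exists a constant C with ∫_0^t (φ(s)/s) ds ≤ C φ(t) for all t > 0 if and only if the lower dilation index α_φ is strictly positive; (ii) there exists a constant C with ∫_t^∞ (φ(s)/s²) ds ≤ C φ(t)/t for all t > 0 if and only if the upper dilation index β_φ is strictly less than 1. -/
open MeasureTheory Set Filter ENNReal NNReal

noncomputable section

/-- `φ : (0,∞) → (0,∞)` is quasi-concave: non-decreasing and
`φ(t) ≤ max(1, t/s) φ(s)` for all `s, t > 0`. -/
def QuasiConcaveOn (φ : ℝ → ℝ) : Prop :=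
  MonotoneOn φ (Ioi 0) ∧
  ∀ s ∈ Ioi (0:ℝ), ∀ t ∈ Ioi (0:ℝ), φ t ≤ max 1 (t / s) * φ s

/-- The dilation function `s_φ(t) = sup_{r>0} φ(rt)/φ(r)` of `φ`. -/
def dilationFn (φ : ℝ → ℝ) (t : ℝ) : ℝ := ⨆ r : {r : ℝ // 0 < r}, φ (r.1 * t) / φ r.1

namespace St7

instance : Nonempty {r : ℝ // 0 < r} := ⟨⟨1, one_pos⟩⟩

variable {φ : ℝ → ℝ}

lemma qc_mono (hφ : QuasiConcaveOn φ) {s t : ℝ} (hs : 0 < s) (hst : s ≤ t) :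
    φ s ≤ φ t :=
  hφ.1 (mem_Ioi.2 hs) (mem_Ioi.2 (lt_of_lt_of_le hs hst)) hst

/-- `φ t ≤ (t/s) φ s` for `0 < s ≤ t`, in multiplied form. -/
lemma qc_ratio (hpos : ∀ t ∈ Ioi (0:ℝ), 0 < φ t) (hφ : QuasiConcaveOn φ)
    {s t : ℝ} (hs : 0 < s) (hst : s ≤ t) : φ t * s ≤ φ s * t := by
  have ht : 0 < t := lt_of_lt_of_le hs hst
  have h := hφ.2 s (mem_Ioi.2 hs) t (mem_Ioi.2 ht)
  have h1 : (1:ℝ) ≤ t / s := (one_le_div hs).2 hst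
  rw [max_eq_right h1] at h
  have := mul_le_mul_of_nonneg_right h hs.le
  calc φ t * s ≤ t / s * φ s * s := this
    _ = φ s * t := by field_simp

lemma qc_le_max (hpos : ∀ t ∈ Ioi (0:ℝ), 0 < φ t) (hφ : QuasiConcaveOn φ)
    {r t : ℝ} (hr : 0 < r) (ht : 0 < t) : φ (r * t) ≤ max 1 t * φ r := by
  have h := hφ.2 r (mem_Ioi.2 hr) (r * t) (mem_Ioi.2 (mul_pos hr ht))
  rwa [show r * t / r = t by field_simp] at h

lemma qc_bdd (hpos : ∀ t ∈ Ioi (0:ℝ), 0 < φ t) (hφ : QuasiConcaveOn φ)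
    {t : ℝ} (ht : 0 < t) :
    BddAbove (Set.range fun r : {r : ℝ // 0 < r} => φ (r.1 * t) / φ r.1) := by
  refine ⟨max 1 t, ?_⟩
  rintro x ⟨r, rfl⟩
  have hφr : 0 < φ r.1 := hpos _ (mem_Ioi.2 r.2)
  exact (div_le_iff₀ hφr).2 (qc_le_max hpos hφ r.2 ht)

lemma le_dilation (hpos : ∀ t ∈ Ioi (0:ℝ), 0 < φ t) (hφ : QuasiConcaveOn φ)
    {t : ℝ} (ht : 0 < t) {r : ℝ} (hr : 0 < r) :
    φ (r * t) ≤ dilationFn φ t * φ r := by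
  have hφr : 0 < φ r := hpos _ (mem_Ioi.2 hr)
  have := le_ciSup (qc_bdd hpos hφ ht) (⟨r, hr⟩ : {r : ℝ // 0 < r})
  calc φ (r * t) = φ (r * t) / φ r * φ r := by field_simp
    _ ≤ dilationFn φ t * φ r := mul_le_mul_of_nonneg_right this hφr.le

lemma dilation_le (hpos : ∀ t ∈ Ioi (0:ℝ), 0 < φ t) (hφ : QuasiConcaveOn φ)
    {t : ℝ} (ht : 0 < t) : dilationFn φ t ≤ max 1 t := by
  refine ciSup_le fun r => ?_
  have hφr : 0 < φ r.1 := hpos _ (mem_Ioi.2 r.2)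
  exact (div_le_iff₀ hφr).2 (qc_le_max hpos hφ r.2 ht)

lemma dilation_ge (hpos : ∀ t ∈ Ioi (0:ℝ), 0 < φ t) (hφ : QuasiConcaveOn φ)
    {t : ℝ} (ht : 0 < t) : min 1 t ≤ dilationFn φ t := by
  have h1 : 0 < φ 1 := hpos _ (by norm_num)
  have hφt : 0 < φ t := hpos _ (mem_Ioi.2 ht)
  have key : min 1 t ≤ φ (1 * t) / φ 1 := by
    rw [one_mul]
    rcases le_total t 1 with h | h
    · -- min = t; need t ≤ φ t / φ 1, i.e. t * φ 1 ≤ φ t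
      rw [min_eq_right h, le_div_iff₀ h1]
      have := qc_ratio hpos hφ ht h
      nlinarith
    · rw [min_eq_left h, le_div_iff₀ h1, one_mul]
      exact qc_mono hφ one_pos h
  exact key.trans (le_ciSup (qc_bdd hpos hφ ht) ⟨1, one_pos⟩)

lemma dilation_pos (hpos : ∀ t ∈ Ioi (0:ℝ), 0 < φ t) (hφ : QuasiConcaveOn φ)
    {t : ℝ} (ht : 0 < t) : 0 < dilationFn φ t :=
  lt_of_lt_of_le (lt_min one_pos ht) (dilation_ge hpos hφ ht)

lemma dilation_submul (hpos : ∀ t ∈ Ioi (0:ℝ), 0 < φ t) (hφ : QuasiConcaveOn φ)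
    {a b : ℝ} (ha : 0 < a) (hb : 0 < b) :
    dilationFn φ (a * b) ≤ dilationFn φ a * dilationFn φ b := by
  refine ciSup_le fun r => ?_
  have hφr : 0 < φ r.1 := hpos _ (mem_Ioi.2 r.2)
  rw [div_le_iff₀ hφr]
  have h1 : φ (r.1 * (a * b)) ≤ dilationFn φ a * φ (r.1 * b) := by
    have := le_dilation hpos hφ ha (mul_pos r.2 hb)
    rwa [show r.1 * b * a = r.1 * (a * b) by ring] at this
  have h2 : φ (r.1 * b) ≤ dilationFn φ b * φ r.1 := le_dilation hpos hφ hb r.2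
  have hda : 0 ≤ dilationFn φ a := (dilation_pos hpos hφ ha).le
  calc φ (r.1 * (a * b)) ≤ dilationFn φ a * (dilationFn φ b * φ r.1) :=
        h1.trans (mul_le_mul_of_nonneg_left h2 hda)
    _ = dilationFn φ a * dilationFn φ b * φ r.1 := by ring


instance inst2 : Nonempty {u : ℝ // 0 < u} := ⟨⟨1, one_pos⟩⟩

lemma fekete_iterate (f : ℝ → ℝ) (hsub : ∀ u v, 0 < u → 0 < v → f (u + v) ≤ f u + f v)
    {u : ℝ} (hu : 0 < u) : ∀ n : ℕ, ∀ v, 0 < v → f (n * u + v) ≤ n * f u + f v := by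
  intro n
  induction n with
  | zero => intro v hv; simp
  | succ n ih =>
    intro v hv
    have h1 : f (u + (n * u + v)) ≤ f u + f (n * u + v) :=
      hsub u (n * u + v) hu (by positivity)
    have h2 := ih v hv
    have h3 : ((n : ℝ) + 1) * u + v = u + (n * u + v) := by ring
    push_cast
    rw [h3]
    linarith

/-- Continuous Fekete lemma for subadditive functions with `|f u| ≤ u`. -/
lemma fekete (f : ℝ → ℝ) (hsub : ∀ u v, 0 < u → 0 < v → f (u + v) ≤ f u + f v)
    (hbd : ∀ u, 0 < u → |f u| ≤ u) :
    ∃ L : ℝ, (∀ u, 0 < u → L ≤ f u / u) ∧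
      Tendsto (fun u => f u / u) atTop (nhds L) := by
  have hlow : ∀ u : {u : ℝ // 0 < u}, (-1 : ℝ) ≤ f u.1 / u.1 := by
    intro u
    rw [le_div_iff₀ u.2]
    have := (abs_le.1 (hbd u.1 u.2)).1
    linarith
  have hbdd : BddBelow (Set.range fun u : {u : ℝ // 0 < u} => f u.1 / u.1) := by
    refine ⟨-1, ?_⟩; rintro x ⟨u, rfl⟩; exact hlow u
  set L : ℝ := ⨅ u : {u : ℝ // 0 < u}, f u.1 / u.1 with hL
  have hLle : ∀ u, 0 < u → L ≤ f u / u := fun u hu => ciInf_le hbdd ⟨u, hu⟩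
  refine ⟨L, hLle, ?_⟩
  rw [Metric.tendsto_atTop]
  intro ε hε
  have hlt : L < L + ε / 2 := by linarith
  obtain ⟨u₀, hu₀⟩ := exists_lt_of_ciInf_lt (show L < L + ε / 2 from hlt)
  set a := u₀.1 with ha
  have ha0 : 0 < a := u₀.2
  refine ⟨max (2 * a) (8 * a / ε) + 1, fun u hu => ?_⟩
  have hu2a : 2 * a ≤ u := by
    have := le_max_left (2 * a) (8 * a / ε); linarith
  have hu8 : 8 * a / ε < u := by
    have := le_max_right (2 * a) (8 * a / ε); linarith
  have hupos : 0 < u := by linarith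
  set m := ⌊u / a⌋₊ with hm
  have hua : (2 : ℝ) ≤ u / a := (le_div_iff₀ ha0).2 (by linarith)
  have hm2 : 2 ≤ m := by
    exact_mod_cast Nat.le_floor (α := ℝ) (n := 2) (by exact_mod_cast hua)
  have hmle : (m : ℝ) ≤ u / a := Nat.floor_le (by positivity)
  have hmgt : u / a < m + 1 := Nat.lt_floor_add_one _
  set n := m - 1 with hn
  have hncast : (n : ℝ) = (m : ℝ) - 1 := by
    rw [hn, Nat.cast_sub (by omega : 1 ≤ m)]; norm_num
  set r := u - n * a with hr
  have hrpos : a ≤ r := by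
    have h1 : (n : ℝ) * a ≤ u - a := by
      rw [hncast]
      have := (le_div_iff₀ ha0).1 hmle
      nlinarith
    simp only [hr]; linarith
  have hrlt : r < 2 * a := by
    have h2 : u < ((m : ℝ) + 1) * a := (div_lt_iff₀ ha0).1 hmgt
    have h3 : (n : ℝ) * a = (m : ℝ) * a - a := by rw [hncast]; ring
    simp only [hr, h3]; nlinarith
  have hr0 : 0 < r := lt_of_lt_of_le ha0 hrpos
  have hdecomp : f u ≤ n * f a + f r := by
    have h4 : u = n * a + r := by simp [hr]
    rw [h4]
    exact fekete_iterate f hsub ha0 n r hr0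
  have hna : (n : ℝ) * a = u - r := by simp [hr]
  have h1 : (n : ℝ) * f a * a = f a * (u - r) := by
    rw [← hna]; ring
  have habs1 : -a ≤ f a := (abs_le.1 (hbd a ha0)).1
  have habs2 : f a ≤ a := (abs_le.1 (hbd a ha0)).2
  have hfr : f r ≤ 2 * a := le_trans (le_abs_self _) ((hbd r hr0).trans hrlt.le)
  have key2 : f u * a ≤ f a * u + 4 * (a * a) := by nlinarith [hdecomp]
  have key : f u / u ≤ f a / a + 4 * a / u := by
    rw [div_add_div _ _ (ne_of_gt ha0) (ne_of_gt hupos),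
      div_le_div_iff₀ hupos (by positivity)]
    nlinarith [key2]
  have h4a : 4 * a / u < ε / 2 := by
    rw [div_lt_iff₀ hupos]
    have h8 : 8 * a < u * ε := (div_lt_iff₀ hε).1 hu8
    linarith
  have hfin : f u / u < L + ε := by
    have := hu₀
    calc f u / u ≤ f a / a + 4 * a / u := key
      _ < (L + ε / 2) + ε / 2 := by exact add_lt_add hu₀ h4a
      _ = L + ε := by ring
  rw [Real.dist_eq, abs_of_nonneg (by linarith [hLle u hupos])]
  linarith [hLle u hupos]


variable {φ : ℝ → ℝ}

lemma logdil_subadd (hpos : ∀ t ∈ Ioi (0:ℝ), 0 < φ t) (hφ : QuasiConcaveOn φ)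
    {a b : ℝ} (ha : 0 < a) (hb : 0 < b) :
    Real.log (dilationFn φ (a * b)) ≤
      Real.log (dilationFn φ a) + Real.log (dilationFn φ b) := by
  rw [← Real.log_mul (ne_of_gt (dilation_pos hpos hφ ha)) (ne_of_gt (dilation_pos hpos hφ hb))]
  exact Real.log_le_log (dilation_pos hpos hφ (mul_pos ha hb)) (dilation_submul hpos hφ ha hb)

/-- Existence of the upper dilation index as a limit. -/
lemma beta_exists (hpos : ∀ t ∈ Ioi (0:ℝ), 0 < φ t) (hφ : QuasiConcaveOn φ) :
    ∃ β : ℝ, (∀ b, 1 < b → β ≤ Real.log (dilationFn φ b) / Real.log b) ∧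
      Tendsto (fun t => Real.log (dilationFn φ t) / Real.log t) atTop (nhds β) := by
  set f : ℝ → ℝ := fun u => Real.log (dilationFn φ (Real.exp u)) with hf
  have hsub : ∀ u v, 0 < u → 0 < v → f (u + v) ≤ f u + f v := by
    intro u v hu hv
    simp only [hf, Real.exp_add]
    exact logdil_subadd hpos hφ (Real.exp_pos u) (Real.exp_pos v)
  have hbd : ∀ u, 0 < u → |f u| ≤ u := by
    intro u hu
    have he1 : 1 ≤ Real.exp u := Real.one_le_exp hu.le
    have hsle : dilationFn φ (Real.exp u) ≤ Real.exp u := by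
      have := dilation_le hpos hφ (Real.exp_pos u)
      rwa [max_eq_right he1] at this
    have hsge : 1 ≤ dilationFn φ (Real.exp u) := by
      have := dilation_ge hpos hφ (Real.exp_pos u)
      rwa [min_eq_left he1] at this
    have h1 : 0 ≤ f u := Real.log_nonneg hsge
    have h2 : f u ≤ u := by
      have := Real.log_le_log (lt_of_lt_of_le one_pos hsge) hsle
      rwa [Real.log_exp] at this
    rw [abs_le]; exact ⟨by linarith, h2⟩
  obtain ⟨L, hL, htd⟩ := fekete f hsub hbd
  refine ⟨L, ?_, ?_⟩
  · intro b hb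
    have h := hL (Real.log b) (Real.log_pos hb)
    rw [hf] at h
    simp only [Real.exp_log (by linarith : (0:ℝ) < b)] at h
    exact h
  · have hcomp : Tendsto (fun t => f (Real.log t) / Real.log t) atTop (nhds L) :=
      htd.comp Real.tendsto_log_atTop
    refine hcomp.congr' ?_
    filter_upwards [eventually_gt_atTop (0:ℝ)] with t ht
    simp only [hf, Real.exp_log ht]


/-- Existence of the lower dilation index as a limit. -/
lemma alpha_exists (hpos : ∀ t ∈ Ioi (0:ℝ), 0 < φ t) (hφ : QuasiConcaveOn φ) :
    ∃ L : ℝ, (∀ a, 0 < a → a < 1 → L ≤ Real.log (dilationFn φ a) / (-Real.log a)) ∧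
      Tendsto (fun t => Real.log (dilationFn φ t) / Real.log t)
        (nhdsWithin 0 (Ioi 0)) (nhds (-L)) := by
  set f : ℝ → ℝ := fun u => Real.log (dilationFn φ (Real.exp (-u))) with hf
  have hsub : ∀ u v, 0 < u → 0 < v → f (u + v) ≤ f u + f v := by
    intro u v hu hv
    have : Real.exp (-(u + v)) = Real.exp (-u) * Real.exp (-v) := by
      rw [← Real.exp_add]; ring_nf
    simp only [hf, this]
    exact logdil_subadd hpos hφ (Real.exp_pos _) (Real.exp_pos _)
  have hbd : ∀ u, 0 < u → |f u| ≤ u := by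
    intro u hu
    have he1 : Real.exp (-u) ≤ 1 := Real.exp_le_one_iff.2 (by linarith)
    have hsle : dilationFn φ (Real.exp (-u)) ≤ 1 := by
      have := dilation_le hpos hφ (Real.exp_pos (-u))
      rwa [max_eq_left he1] at this
    have hsge : Real.exp (-u) ≤ dilationFn φ (Real.exp (-u)) := by
      have := dilation_ge hpos hφ (Real.exp_pos (-u))
      rwa [min_eq_right he1] at this
    have h1 : f u ≤ 0 := Real.log_nonpos (dilation_pos hpos hφ (Real.exp_pos _)).le hsle
    have h2 : -u ≤ f u := by
      have := Real.log_le_log (Real.exp_pos (-u)) hsge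
      rwa [Real.log_exp] at this
    rw [abs_le]; exact ⟨by linarith, by linarith⟩
  obtain ⟨L, hL, htd⟩ := fekete f hsub hbd
  refine ⟨L, ?_, ?_⟩
  · intro a ha0 ha1
    have hlog : 0 < -Real.log a := by
      have := Real.log_neg ha0 ha1; linarith
    have h := hL (-Real.log a) hlog
    rw [hf] at h
    simp only [neg_neg, Real.exp_log ha0] at h
    exact h
  · have hneg : Tendsto (fun t : ℝ => -Real.log t) (nhdsWithin 0 (Ioi 0)) atTop :=
      tendsto_neg_atBot_atTop.comp Real.tendsto_log_nhdsGT_zero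
    have hcomp : Tendsto (fun t => f (-Real.log t) / (-Real.log t))
        (nhdsWithin 0 (Ioi 0)) (nhds L) := htd.comp hneg
    have hcomp' := hcomp.neg
    rw [show -L = -L from rfl] at hcomp'
    refine hcomp'.congr' ?_
    filter_upwards [self_mem_nhdsWithin] with t ht
    have ht0 : (0:ℝ) < t := ht
    simp only [hf, neg_neg, Real.exp_log ht0]
    rw [div_neg, neg_neg]


lemma phi_iter_lt (hpos : ∀ t ∈ Ioi (0:ℝ), 0 < φ t) (hφ : QuasiConcaveOn φ)
    {a : ℝ} (ha0 : 0 < a) {t : ℝ} (ht : 0 < t) :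
    ∀ k : ℕ, φ (t * a ^ k) ≤ (dilationFn φ a) ^ k * φ t := by
  intro k
  induction k with
  | zero => simp
  | succ k ih =>
    have h1 : φ (t * a ^ (k+1)) ≤ dilationFn φ a * φ (t * a ^ k) := by
      have := le_dilation hpos hφ ha0 (show 0 < t * a ^ k by positivity)
      rwa [show t * a ^ k * a = t * a ^ (k+1) by ring] at this
    calc φ (t * a ^ (k+1)) ≤ dilationFn φ a * φ (t * a ^ k) := h1
      _ ≤ dilationFn φ a * ((dilationFn φ a) ^ k * φ t) :=
          mul_le_mul_of_nonneg_left ih (dilation_pos hpos hφ ha0).le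
      _ = (dilationFn φ a) ^ (k+1) * φ t := by ring

lemma int_i_of_contract (hpos : ∀ t ∈ Ioi (0:ℝ), 0 < φ t) (hφ : QuasiConcaveOn φ)
    {a : ℝ} (ha0 : 0 < a) (ha1 : a < 1) (hsa : dilationFn φ a < 1) :
    ∃ C : ℝ, ∀ t ∈ Ioi (0:ℝ),
      (∫⁻ s in Ioc (0:ℝ) t, ENNReal.ofReal (φ s / s)) ≤ ENNReal.ofReal (C * φ t) := by
  set c := dilationFn φ a with hc
  have hc0 : 0 < c := dilation_pos hpos hφ ha0
  refine ⟨(1/a - 1) / (1 - c), fun t ht => ?_⟩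
  have ht : (0:ℝ) < t := ht
  have hφt : 0 < φ t := hpos _ (mem_Ioi.2 ht)
  -- cover
  have hcover : Ioc (0:ℝ) t ⊆ ⋃ k : ℕ, Ioc (t * a ^ (k+1)) (t * a ^ k) := by
    intro s hs
    obtain ⟨hs0, hst⟩ := hs
    have hex : ∃ k : ℕ, t * a ^ (k+1) < s := by
      obtain ⟨n, hn⟩ := exists_pow_lt_of_lt_one (show 0 < s / t by positivity) ha1
      refine ⟨n, ?_⟩
      have h1 : a ^ (n+1) ≤ a ^ n :=
        pow_le_pow_of_le_one ha0.le ha1.le (by omega)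
      have h2 : a ^ n * t < s := (lt_div_iff₀ ht).1 hn
      nlinarith
    refine mem_iUnion.2 ⟨Nat.find hex, Nat.find_spec hex, ?_⟩
    rcases Nat.eq_zero_or_eq_succ_pred (Nat.find hex) with h0 | hsucc
    · rw [h0]; simpa using hst
    · rw [hsucc]
      have := Nat.find_min hex (show Nat.find hex - 1 < Nat.find hex by omega)
      rw [not_lt] at this
      have heq : (Nat.find hex - 1) + 1 = Nat.find hex := by omega
      rw [heq] at this
      calc s ≤ t * a ^ (Nat.find hex) := this
        _ = t * a ^ (Nat.find hex - 1 + 1) := by rw [heq]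
  have h1 : (∫⁻ s in Ioc (0:ℝ) t, ENNReal.ofReal (φ s / s)) ≤
      ∑' k : ℕ, ∫⁻ s in Ioc (t * a ^ (k+1)) (t * a ^ k), ENNReal.ofReal (φ s / s) :=
    (lintegral_mono_set hcover).trans (lintegral_iUnion_le _ _)
  have hterm : ∀ k : ℕ, (∫⁻ s in Ioc (t * a ^ (k+1)) (t * a ^ k), ENNReal.ofReal (φ s / s)) ≤
      ENNReal.ofReal (c ^ k * (φ t * (1/a - 1))) := by
    intro k
    have hlo : (0:ℝ) < t * a ^ (k+1) := by positivity
    have hhi : t * a ^ (k+1) ≤ t * a ^ k := by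
      have : a ^ (k+1) ≤ a ^ k := pow_le_pow_of_le_one ha0.le ha1.le (by omega)
      nlinarith
    have hφhi : 0 ≤ φ (t * a ^ k) := (hpos _ (mem_Ioi.2 (by positivity))).le
    have step1 : (∫⁻ s in Ioc (t * a ^ (k+1)) (t * a ^ k), ENNReal.ofReal (φ s / s)) ≤
        ∫⁻ _ in Ioc (t * a ^ (k+1)) (t * a ^ k),
          ENNReal.ofReal (φ (t * a ^ k) / (t * a ^ (k+1))) := by
      refine setLIntegral_mono' measurableSet_Ioc fun s hs => ?_
      refine ENNReal.ofReal_le_ofReal ?_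
      exact div_le_div₀ hφhi (qc_mono hφ (lt_trans hlo hs.1) hs.2) hlo hs.1.le
    rw [setLIntegral_const, Real.volume_Ioc] at step1
    refine step1.trans ?_
    rw [← ENNReal.ofReal_mul (by positivity)]
    refine ENNReal.ofReal_le_ofReal ?_
    have heq : φ (t * a ^ k) / (t * a ^ (k+1)) * (t * a ^ k - t * a ^ (k+1)) =
        φ (t * a ^ k) * (1/a - 1) := by
      field_simp
      ring
    rw [heq]
    have := phi_iter_lt hpos hφ ha0 ht k
    have hfac : (0:ℝ) ≤ 1/a - 1 := by
      rw [sub_nonneg, le_div_iff₀ ha0]; linarith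
    nlinarith
  have h2 : (∑' k : ℕ, ∫⁻ s in Ioc (t * a ^ (k+1)) (t * a ^ k), ENNReal.ofReal (φ s / s)) ≤
      ∑' k : ℕ, ENNReal.ofReal (c ^ k * (φ t * (1/a - 1))) := ENNReal.tsum_le_tsum hterm
  have h3 : (∑' k : ℕ, ENNReal.ofReal (c ^ k * (φ t * (1/a - 1)))) =
      ENNReal.ofReal ((1/a - 1) / (1 - c) * φ t) := by
    have hfac : (0:ℝ) ≤ 1/a - 1 := by
      rw [sub_nonneg, le_div_iff₀ ha0]; linarith
    have hM : (0:ℝ) ≤ φ t * (1/a - 1) := by positivity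
    calc (∑' k : ℕ, ENNReal.ofReal (c ^ k * (φ t * (1/a - 1))))
        = ∑' k : ℕ, (ENNReal.ofReal c) ^ k * ENNReal.ofReal (φ t * (1/a - 1)) := by
          congr 1; funext k
          rw [← ENNReal.ofReal_pow hc0.le, ← ENNReal.ofReal_mul (by positivity)]
      _ = (∑' k : ℕ, (ENNReal.ofReal c) ^ k) * ENNReal.ofReal (φ t * (1/a - 1)) :=
          ENNReal.tsum_mul_right
      _ = (1 - ENNReal.ofReal c)⁻¹ * ENNReal.ofReal (φ t * (1/a - 1)) := by
          rw [ENNReal.tsum_geometric]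
      _ = ENNReal.ofReal ((1 - c)⁻¹) * ENNReal.ofReal (φ t * (1/a - 1)) := by
          congr 1
          have he : (1 : ℝ≥0∞) - ENNReal.ofReal c = ENNReal.ofReal (1 - c) := by
            rw [ENNReal.ofReal_sub _ hc0.le, ENNReal.ofReal_one]
          rw [he, ← ENNReal.ofReal_inv_of_pos (by linarith)]
      _ = ENNReal.ofReal ((1/a - 1) / (1 - c) * φ t) := by
          have hc1' : (0:ℝ) < 1 - c := by linarith
          rw [← ENNReal.ofReal_mul (by positivity)]
          congr 1
          field_simp
  exact h1.trans (h2.trans (le_of_eq h3))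


lemma lower_i (hpos : ∀ t ∈ Ioi (0:ℝ), 0 < φ t) (hφ : QuasiConcaveOn φ) :
    ∀ n : ℕ, ∀ t : ℝ, 0 < t →
      ENNReal.ofReal ((n / 2 : ℝ) * φ (t / 2 ^ n)) ≤
        ∫⁻ s in Ioc (0:ℝ) t, ENNReal.ofReal (φ s / s) := by
  intro n
  induction n with
  | zero => intro t ht; simp
  | succ n ih =>
    intro t ht
    have ht2 : (0:ℝ) < t / 2 := by linarith
    have hsplit : Ioc (0:ℝ) t = Ioc 0 (t/2) ∪ Ioc (t/2) t :=
      (Ioc_union_Ioc_eq_Ioc (by linarith) (by linarith)).symm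
    rw [hsplit, lintegral_union measurableSet_Ioc (Ioc_disjoint_Ioc_of_le le_rfl)]
    have hIH := ih (t/2) ht2
    have heq : t / 2 / 2 ^ n = t / 2 ^ (n+1) := by
      rw [div_div, pow_succ, mul_comm]
    rw [heq] at hIH
    have hB : ENNReal.ofReal (φ (t/2) / 2) ≤
        ∫⁻ s in Ioc (t/2) t, ENNReal.ofReal (φ s / s) := by
      have hconst : ENNReal.ofReal (φ (t/2) / 2) =
          ENNReal.ofReal (φ (t/2) / t) * volume (Ioc (t/2) t) := by
        have hφ2 : 0 < φ (t/2) := hpos _ (mem_Ioi.2 ht2)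
        rw [Real.volume_Ioc, ← ENNReal.ofReal_mul (by positivity)]
        congr 1
        field_simp
        ring
      rw [hconst, ← setLIntegral_const]
      refine setLIntegral_mono' measurableSet_Ioc fun s hs => ?_
      refine ENNReal.ofReal_le_ofReal ?_
      have hs0 : 0 < s := lt_trans ht2 hs.1
      exact div_le_div₀ (hpos s (mem_Ioi.2 hs0)).le (qc_mono hφ ht2 hs.1.le) hs0 hs.2
    have hpow : t / 2 ^ (n+1) ≤ t / 2 := by
      apply div_le_div_of_nonneg_left ht.le (by norm_num)
      have : (2:ℝ)^1 ≤ 2 ^ (n+1) := pow_le_pow_right₀ (by norm_num) (by omega)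
      simpa using this
    have hmono : φ (t / 2 ^ (n+1)) ≤ φ (t/2) := qc_mono hφ (by positivity) hpow
    have hφp : 0 < φ (t / 2 ^ (n+1)) := hpos _ (mem_Ioi.2 (by positivity))
    calc ENNReal.ofReal ((↑(n+1) / 2 : ℝ) * φ (t / 2 ^ (n+1)))
        ≤ ENNReal.ofReal ((n / 2 : ℝ) * φ (t / 2 ^ (n+1))) + ENNReal.ofReal (φ (t/2) / 2) := by
          have hφ2 : 0 < φ (t/2) := hpos _ (mem_Ioi.2 ht2)
          rw [← ENNReal.ofReal_add (mul_nonneg (by positivity) hφp.le)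
            (div_nonneg hφ2.le (by norm_num))]
          refine ENNReal.ofReal_le_ofReal ?_
          push_cast
          nlinarith
      _ ≤ _ := add_le_add hIH hB

lemma contract_of_int (hpos : ∀ t ∈ Ioi (0:ℝ), 0 < φ t) (hφ : QuasiConcaveOn φ)
    (h : ∃ C : ℝ, ∀ t ∈ Ioi (0:ℝ),
      (∫⁻ s in Ioc (0:ℝ) t, ENNReal.ofReal (φ s / s)) ≤ ENNReal.ofReal (C * φ t)) :
    ∃ a : ℝ, 0 < a ∧ a < 1 ∧ dilationFn φ a < 1 := by
  obtain ⟨C, hC⟩ := h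
  set n : ℕ := ⌈2 * C⌉₊ + 1 with hn
  have hnpos : 0 < (n:ℝ) := by positivity
  have hnC : 2 * C < n := by
    have := Nat.le_ceil (2 * C)
    have : (⌈2 * C⌉₊ : ℝ) < n := by exact_mod_cast Nat.lt_succ_self _
    linarith [Nat.le_ceil (2 * C)]
  set a : ℝ := (1/2 : ℝ) ^ n with ha
  have ha0 : 0 < a := by positivity
  have ha1 : a < 1 := pow_lt_one₀ (by norm_num) (by norm_num) (by omega)
  have key : ∀ r : ℝ, 0 < r → (n / 2 : ℝ) * φ (r * a) ≤ C * φ r := by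
    intro r hr
    have hra : r * a = r / 2 ^ n := by
      rw [ha]
      field_simp
      rw [← mul_pow]; norm_num
    have h1 := (lower_i hpos hφ n r hr).trans (hC r (mem_Ioi.2 hr))
    rw [← hra] at h1
    rcases (ENNReal.ofReal_le_ofReal_iff'.1 h1) with h2 | h2
    · exact h2
    · exfalso
      have : 0 < (n / 2 : ℝ) * φ (r * a) := by
        have := hpos (r * a) (mem_Ioi.2 (by positivity))
        positivity
      linarith
  refine ⟨a, ha0, ha1, ?_⟩
  have hle : dilationFn φ a ≤ 2 * C / n := by
    refine ciSup_le fun r => ?_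
    have hφr : 0 < φ r.1 := hpos _ (mem_Ioi.2 r.2)
    rw [div_le_div_iff₀ hφr hnpos]
    have := key r.1 r.2
    nlinarith
  have : 2 * C / n < 1 := (div_lt_one hnpos).2 hnC
  linarith


lemma int_ii_of_contract (hpos : ∀ t ∈ Ioi (0:ℝ), 0 < φ t) (hφ : QuasiConcaveOn φ)
    {b : ℝ} (hb : 1 < b) (hsb : dilationFn φ b < b) :
    ∃ C : ℝ, ∀ t ∈ Ioi (0:ℝ),
      (∫⁻ s in Ioi t, ENNReal.ofReal (φ s / s ^ 2)) ≤ ENNReal.ofReal (C * (φ t / t)) := by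
  have hb0 : (0:ℝ) < b := by linarith
  set c := dilationFn φ b with hc
  have hc0 : 0 < c := dilation_pos hpos hφ hb0
  have hq1 : c / b < 1 := (div_lt_one hb0).2 hsb
  have hq0 : 0 ≤ c / b := by positivity
  refine ⟨c * (b - 1) / (1 - c / b), fun t ht => ?_⟩
  have ht : (0:ℝ) < t := ht
  have hφt : 0 < φ t := hpos _ (mem_Ioi.2 ht)
  have hcover : Ioi t ⊆ ⋃ k : ℕ, Ioc (t * b ^ k) (t * b ^ (k+1)) := by
    intro s hs
    have hs' : t < s := hs
    have hs0 : 0 < s := lt_trans ht hs'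
    have hex : ∃ k : ℕ, s ≤ t * b ^ (k+1) := by
      obtain ⟨n, hn⟩ := pow_unbounded_of_one_lt (s / t) hb
      have h1 : s < t * b ^ n := by
        have := (div_lt_iff₀ ht).1 hn
        nlinarith
      have h2 : b ^ n ≤ b ^ (n+1) := pow_le_pow_right₀ hb.le (by omega)
      exact ⟨n, by nlinarith⟩
    refine mem_iUnion.2 ⟨Nat.find hex, ?_, Nat.find_spec hex⟩
    rcases Nat.eq_zero_or_eq_succ_pred (Nat.find hex) with h0 | hsucc
    · rw [h0]; simpa using hs'
    · rw [hsucc]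
      have hmin := Nat.find_min hex (show Nat.find hex - 1 < Nat.find hex by omega)
      rw [not_le] at hmin
      have heq : (Nat.find hex - 1) + 1 = Nat.find hex := by omega
      rw [heq] at hmin
      calc t * b ^ (Nat.find hex - 1 + 1) = t * b ^ (Nat.find hex) := by rw [heq]
        _ < s := hmin
  have h1 : (∫⁻ s in Ioi t, ENNReal.ofReal (φ s / s ^ 2)) ≤
      ∑' k : ℕ, ∫⁻ s in Ioc (t * b ^ k) (t * b ^ (k+1)), ENNReal.ofReal (φ s / s ^ 2) :=
    (lintegral_mono_set hcover).trans (lintegral_iUnion_le _ _)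
  have hterm : ∀ k : ℕ,
      (∫⁻ s in Ioc (t * b ^ k) (t * b ^ (k+1)), ENNReal.ofReal (φ s / s ^ 2)) ≤
        ENNReal.ofReal ((c * (b - 1) * (φ t / t)) * (c / b) ^ k) := by
    intro k
    have hlo : (0:ℝ) < t * b ^ k := by positivity
    have hhi : t * b ^ k ≤ t * b ^ (k+1) := by
      have : b ^ k ≤ b ^ (k+1) := pow_le_pow_right₀ hb.le (by omega)
      nlinarith
    have hφhi : 0 ≤ φ (t * b ^ (k+1)) := (hpos _ (mem_Ioi.2 (by positivity))).le
    have step1 : (∫⁻ s in Ioc (t * b ^ k) (t * b ^ (k+1)), ENNReal.ofReal (φ s / s ^ 2)) ≤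
        ∫⁻ _ in Ioc (t * b ^ k) (t * b ^ (k+1)),
          ENNReal.ofReal (φ (t * b ^ (k+1)) / (t * b ^ k) ^ 2) := by
      refine setLIntegral_mono' measurableSet_Ioc fun s hs => ?_
      refine ENNReal.ofReal_le_ofReal ?_
      refine div_le_div₀ hφhi (qc_mono hφ (lt_trans hlo hs.1) hs.2) (by positivity) ?_
      exact pow_le_pow_left₀ hlo.le hs.1.le 2
    rw [setLIntegral_const, Real.volume_Ioc] at step1
    refine step1.trans ?_
    rw [← ENNReal.ofReal_mul (by positivity)]
    refine ENNReal.ofReal_le_ofReal ?_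
    have hiter := phi_iter_lt hpos hφ hb0 ht (k+1)
    rw [← hc] at hiter
    have heq : c ^ (k+1) * φ t * ((t * b ^ (k+1) - t * b ^ k) / (t * b ^ k) ^ 2) =
        (c * (b - 1) * (φ t / t)) * (c / b) ^ k := by
      rw [div_pow]
      field_simp
      ring
    have hfac : (0:ℝ) ≤ (t * b ^ (k+1) - t * b ^ k) / (t * b ^ k) ^ 2 :=
      div_nonneg (by linarith) (by positivity)
    calc φ (t * b ^ (k+1)) / (t * b ^ k) ^ 2 * (t * b ^ (k+1) - t * b ^ k)
        = φ (t * b ^ (k+1)) * ((t * b ^ (k+1) - t * b ^ k) / (t * b ^ k) ^ 2) := by ring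
      _ ≤ c ^ (k+1) * φ t * ((t * b ^ (k+1) - t * b ^ k) / (t * b ^ k) ^ 2) :=
          mul_le_mul_of_nonneg_right hiter hfac
      _ = (c * (b - 1) * (φ t / t)) * (c / b) ^ k := heq
  have hM : (0:ℝ) ≤ c * (b - 1) * (φ t / t) := by
    have hb1 : (0:ℝ) ≤ b - 1 := by linarith
    positivity
  have h3 : (∑' k : ℕ, ENNReal.ofReal ((c * (b - 1) * (φ t / t)) * (c / b) ^ k)) =
      ENNReal.ofReal (c * (b - 1) / (1 - c / b) * (φ t / t)) := by
    calc (∑' k : ℕ, ENNReal.ofReal ((c * (b - 1) * (φ t / t)) * (c / b) ^ k))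
        = ∑' k : ℕ, (ENNReal.ofReal (c / b)) ^ k * ENNReal.ofReal (c * (b - 1) * (φ t / t)) := by
          congr 1; funext k
          rw [← ENNReal.ofReal_pow hq0, ← ENNReal.ofReal_mul (by positivity)]
          congr 1; ring
      _ = (∑' k : ℕ, (ENNReal.ofReal (c / b)) ^ k) * ENNReal.ofReal (c * (b - 1) * (φ t / t)) :=
          ENNReal.tsum_mul_right
      _ = (1 - ENNReal.ofReal (c / b))⁻¹ * ENNReal.ofReal (c * (b - 1) * (φ t / t)) := by
          rw [ENNReal.tsum_geometric]
      _ = ENNReal.ofReal ((1 - c / b)⁻¹) * ENNReal.ofReal (c * (b - 1) * (φ t / t)) := by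
          congr 1
          have he : (1 : ℝ≥0∞) - ENNReal.ofReal (c / b) = ENNReal.ofReal (1 - c / b) := by
            rw [ENNReal.ofReal_sub _ hq0, ENNReal.ofReal_one]
          rw [he, ← ENNReal.ofReal_inv_of_pos (by linarith)]
      _ = ENNReal.ofReal (c * (b - 1) / (1 - c / b) * (φ t / t)) := by
          have hq1' : (0:ℝ) < 1 - c / b := by linarith
          rw [← ENNReal.ofReal_mul (by positivity)]
          congr 1
          field_simp
  exact h1.trans ((ENNReal.tsum_le_tsum hterm).trans (le_of_eq h3))


lemma lower_ii (hpos : ∀ t ∈ Ioi (0:ℝ), 0 < φ t) (hφ : QuasiConcaveOn φ) :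
    ∀ n : ℕ, ∀ t : ℝ, 0 < t →
      ENNReal.ofReal ((n / 2 : ℝ) * (φ (t * 2 ^ n) / (t * 2 ^ n))) ≤
        ∫⁻ s in Ioi t, ENNReal.ofReal (φ s / s ^ 2) := by
  intro n
  induction n with
  | zero => intro t ht; simp
  | succ n ih =>
    intro t ht
    have ht2 : (0:ℝ) < 2 * t := by linarith
    have hsplit : Ioi t = Ioc t (2*t) ∪ Ioi (2*t) :=
      (Ioc_union_Ioi_eq_Ioi (by linarith)).symm
    have hdisj : Disjoint (Ioc t (2*t)) (Ioi (2*t)) := by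
      rw [Set.disjoint_left]
      rintro x ⟨_, hx2⟩ hx3
      exact absurd (mem_Ioi.1 hx3) (not_lt.2 hx2)
    rw [hsplit, lintegral_union measurableSet_Ioi hdisj]
    have hIH := ih (2*t) ht2
    have heq : 2 * t * 2 ^ n = t * 2 ^ (n+1) := by rw [pow_succ]; ring
    rw [heq] at hIH
    have hbig : (0:ℝ) < t * 2 ^ (n+1) := by positivity
    have hφbig : 0 < φ (t * 2 ^ (n+1)) := hpos _ (mem_Ioi.2 hbig)
    have hφ2t : 0 < φ (2*t) := hpos _ (mem_Ioi.2 ht2)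
    have hB : ENNReal.ofReal ((1/2 : ℝ) * (φ (2*t) / (2*t))) ≤
        ∫⁻ s in Ioc t (2*t), ENNReal.ofReal (φ s / s ^ 2) := by
      have hconst : ENNReal.ofReal ((1/2 : ℝ) * (φ (2*t) / (2*t))) =
          ENNReal.ofReal (φ (2*t) / (2*t*(2*t))) * volume (Ioc t (2*t)) := by
        rw [Real.volume_Ioc, ← ENNReal.ofReal_mul (by positivity)]
        congr 1
        field_simp
        ring
      rw [hconst, ← setLIntegral_const]
      refine setLIntegral_mono' measurableSet_Ioc fun s hs => ?_
      refine ENNReal.ofReal_le_ofReal ?_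
      have hs0 : 0 < s := lt_trans ht hs.1
      rw [div_le_div_iff₀ (by positivity) (by positivity)]
      have hr := qc_ratio hpos hφ hs0 hs.2
      have hφs : 0 < φ s := hpos _ (mem_Ioi.2 hs0)
      have e1 : φ (2*t) * s * s ≤ φ s * (2*t) * s := mul_le_mul_of_nonneg_right hr hs0.le
      have e2 : φ s * (2*t) * s ≤ φ s * (2*t) * (2*t) :=
        mul_le_mul_of_nonneg_left hs.2 (by positivity)
      nlinarith [e1, e2]
    have hmono : φ (t * 2 ^ (n+1)) / (t * 2 ^ (n+1)) ≤ φ (2*t) / (2*t) := by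
      rw [div_le_div_iff₀ hbig ht2]
      have h2le : 2 * t ≤ t * 2 ^ (n+1) := by
        have : (2:ℝ) ≤ 2 ^ (n+1) := by
          calc (2:ℝ) = 2^1 := by norm_num
            _ ≤ 2 ^ (n+1) := pow_le_pow_right₀ (by norm_num) (by omega)
        nlinarith
      have := qc_ratio hpos hφ ht2 h2le
      nlinarith
    calc ENNReal.ofReal ((↑(n+1) / 2 : ℝ) * (φ (t * 2 ^ (n+1)) / (t * 2 ^ (n+1))))
        ≤ ENNReal.ofReal ((n / 2 : ℝ) * (φ (t * 2 ^ (n+1)) / (t * 2 ^ (n+1)))) +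
            ENNReal.ofReal ((1/2 : ℝ) * (φ (2*t) / (2*t))) := by
          rw [← ENNReal.ofReal_add (mul_nonneg (by positivity)
            (div_nonneg hφbig.le hbig.le)) (mul_nonneg (by norm_num)
            (div_nonneg hφ2t.le ht2.le))]
          refine ENNReal.ofReal_le_ofReal ?_
          push_cast
          nlinarith [hmono]
      _ ≤ _ := (add_le_add hIH hB).trans (le_of_eq (add_comm _ _))

lemma contractII_of_int (hpos : ∀ t ∈ Ioi (0:ℝ), 0 < φ t) (hφ : QuasiConcaveOn φ)
    (h : ∃ C : ℝ, ∀ t ∈ Ioi (0:ℝ),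
      (∫⁻ s in Ioi t, ENNReal.ofReal (φ s / s ^ 2)) ≤ ENNReal.ofReal (C * (φ t / t))) :
    ∃ b : ℝ, 1 < b ∧ dilationFn φ b < b := by
  obtain ⟨C, hC⟩ := h
  set n : ℕ := ⌈2 * C⌉₊ + 1 with hn
  have hnpos : 0 < (n:ℝ) := by positivity
  have hnC : 2 * C < n := by
    have h1 : (⌈2 * C⌉₊ : ℝ) < n := by exact_mod_cast Nat.lt_succ_self _
    linarith [Nat.le_ceil (2 * C)]
  set b : ℝ := 2 ^ n with hb
  have hb1 : 1 < b := one_lt_pow₀ (by norm_num) (by omega)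
  have hb0 : (0:ℝ) < b := by linarith
  have key : ∀ r : ℝ, 0 < r → (n / 2 : ℝ) * (φ (r * b) / (r * b)) ≤ C * (φ r / r) := by
    intro r hr
    have h1 := (lower_ii hpos hφ n r hr).trans (hC r (mem_Ioi.2 hr))
    rcases (ENNReal.ofReal_le_ofReal_iff'.1 h1) with h2 | h2
    · exact h2
    · exfalso
      have hφrb : 0 < φ (r * b) := hpos _ (mem_Ioi.2 (by positivity))
      have : 0 < (n / 2 : ℝ) * (φ (r * b) / (r * b)) := by positivity
      linarith
  refine ⟨b, hb1, ?_⟩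
  have hle : dilationFn φ b ≤ 2 * C / n * b := by
    refine ciSup_le fun r => ?_
    have hr : 0 < r.1 := r.2
    have hφr : 0 < φ r.1 := hpos _ (mem_Ioi.2 hr)
    rw [div_le_iff₀ hφr]
    have hk := key r.1 hr
    have hrb : (0:ℝ) < r.1 * b := by positivity
    have h2 : ((n:ℝ) / 2) * (φ (r.1*b) / (r.1*b)) * (r.1 * b) = (n:ℝ)/2 * φ (r.1*b) := by
      field_simp
    have h3 : C * (φ r.1 / r.1) * (r.1 * b) = C * b * φ r.1 := by
      field_simp
    have h4 : (n:ℝ)/2 * φ (r.1*b) ≤ C * b * φ r.1 := by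
      rw [← h2, ← h3]
      exact mul_le_mul_of_nonneg_right hk hrb.le
    rw [show 2*C/(n:ℝ)*b*φ r.1 = (2*(C*b*φ r.1))/(n:ℝ) by ring, le_div_iff₀ hnpos]
    nlinarith [h4]
  have hlt : 2 * C / n * b < b := by
    have : 2 * C / n < 1 := (div_lt_one hnpos).2 hnC
    nlinarith
  linarith

end St7

/-- Lemma 2.16 of the paper.
For any quasi-concave `φ : (0,∞) → (0,∞)`, with lower and upper dilation indices
`α_φ = lim_{t→0⁺} ln s_φ(t)/ln t` and `β_φ = lim_{t→∞} ln s_φ(t)/ln t`: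
(i) `∫_0^t φ(s)/s ds ≲ φ(t)` for all `t > 0` iff `α_φ > 0`;
(ii) `∫_t^∞ φ(s)/s² ds ≲ φ(t)/t` for all `t > 0` iff `β_φ < 1`.
(Since the dilation indices of a quasi-concave function always exist as limits, we
phrase `α_φ > 0` as the existence of a positive limit, and `β_φ < 1` as the existence
of a limit `< 1`.) -/
theorem statement7 (φ : ℝ → ℝ) (hφ_pos : ∀ t ∈ Ioi (0:ℝ), 0 < φ t)
    (hφ : QuasiConcaveOn φ) :
    ((∃ C : ℝ, ∀ t ∈ Ioi (0:ℝ),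
        (∫⁻ s in Ioc (0:ℝ) t, ENNReal.ofReal (φ s / s)) ≤ ENNReal.ofReal (C * φ t)) ↔
      (∃ α : ℝ, 0 < α ∧
        Tendsto (fun t => Real.log (dilationFn φ t) / Real.log t)
          (nhdsWithin 0 (Ioi 0)) (nhds α))) ∧
    ((∃ C : ℝ, ∀ t ∈ Ioi (0:ℝ),
        (∫⁻ s in Ioi t, ENNReal.ofReal (φ s / s ^ 2)) ≤ ENNReal.ofReal (C * (φ t / t))) ↔
      (∃ β : ℝ, β < 1 ∧
        Tendsto (fun t => Real.log (dilationFn φ t) / Real.log t)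
          Filter.atTop (nhds β))) := by
  constructor
  · constructor
    · intro h
      obtain ⟨a, ha0, ha1, hsa⟩ := St7.contract_of_int hφ_pos hφ h
      obtain ⟨L, hL, htd⟩ := St7.alpha_exists hφ_pos hφ
      refine ⟨-L, ?_, htd⟩
      have h1 := hL a ha0 ha1
      have hlogs : Real.log (dilationFn φ a) < 0 :=
        Real.log_neg (St7.dilation_pos hφ_pos hφ ha0) hsa
      have hloga : 0 < -Real.log a := by
        have := Real.log_neg ha0 ha1; linarith
      have h2 : Real.log (dilationFn φ a) / (-Real.log a) < 0 :=
        div_neg_of_neg_of_pos hlogs hloga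
      linarith
    · rintro ⟨α, hα, htd⟩
      have hev : ∀ᶠ t in nhdsWithin (0:ℝ) (Ioi 0),
          α / 2 < Real.log (dilationFn φ t) / Real.log t :=
        htd.eventually (eventually_gt_nhds (by linarith))
      have hev2 : ∀ᶠ t in nhdsWithin (0:ℝ) (Ioi 0), t < 1 :=
        (eventually_lt_nhds one_pos).filter_mono nhdsWithin_le_nhds
      have hev3 : ∀ᶠ t in nhdsWithin (0:ℝ) (Ioi 0), t ∈ Ioi (0:ℝ) :=
        eventually_mem_nhdsWithin
      obtain ⟨a, h1, h2, h3⟩ := (hev.and (hev2.and hev3)).exists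
      have ha0 : 0 < a := h3
      have ha1 : a < 1 := h2
      have hla : Real.log a < 0 := Real.log_neg ha0 ha1
      have hneg : Real.log (dilationFn φ a) < 0 := by
        by_contra hcon
        push_neg at hcon
        have : Real.log (dilationFn φ a) / Real.log a ≤ 0 :=
          div_nonpos_of_nonneg_of_nonpos hcon hla.le
        linarith
      have hsa : dilationFn φ a < 1 :=
        (Real.log_neg_iff (St7.dilation_pos hφ_pos hφ ha0)).1 hneg
      exact St7.int_i_of_contract hφ_pos hφ ha0 ha1 hsa
  · constructor
    · intro h
      obtain ⟨b, hb1, hsb⟩ := St7.contractII_of_int hφ_pos hφ h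
      obtain ⟨β, hβle, htd⟩ := St7.beta_exists hφ_pos hφ
      refine ⟨β, ?_, htd⟩
      have h1 := hβle b hb1
      have h2 : Real.log (dilationFn φ b) / Real.log b < 1 := by
        rw [div_lt_one (Real.log_pos hb1)]
        exact Real.log_lt_log (St7.dilation_pos hφ_pos hφ (by linarith)) hsb
      linarith
    · rintro ⟨β, hβ, htd⟩
      have hev : ∀ᶠ t in atTop, Real.log (dilationFn φ t) / Real.log t < (β + 1) / 2 :=
        htd.eventually (eventually_lt_nhds (by linarith))
      obtain ⟨b, h1, h2⟩ := (hev.and (eventually_gt_atTop (1:ℝ))).exists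
      have hb0 : (0:ℝ) < b := lt_trans one_pos h2
      have hlb : 0 < Real.log b := Real.log_pos h2
      have hsb : dilationFn φ b < b := by
        have h3 : Real.log (dilationFn φ b) / Real.log b < 1 := by linarith
        rw [div_lt_one hlb] at h3
        exact (Real.log_lt_log_iff (St7.dilation_pos hφ_pos hφ hb0) hb0).1 h3
      exact St7.int_ii_of_contract hφ_pos hφ h2 hsb
end
end

section
/- Let (X_0, X_1) be a Banach couple and let A_j be a closed operator on X_j for j = 0,1. Assume A_0 x = A_1 x for all x ∈ D(A_0) ∩ D(A_1), and that there exists λ ∈ ρ(A_0) ∩ ρ(A_1) such that (λ − A_0)^{−1} and (λ − A_1)^{−1} coincide on X_0 ∩ X_1. Let A be the unique linear operator with domain D(A_0) + D(A_1) ⊂ X_0 + X_1 defined by A(x_0 + x_1) = A_0 x_0 + A_1 x_1 for x_j ∈ D(A_j). Then λ ∈ ρ(A), and for every interpolation functor F, the part A_F of A in F(X_0, X_1) is a closed operator and F(D_{A_0}, D_{A_1}) = D_{A_F} up to equivalence of norms (D_{A_F} carrying the graph norm of A_F). -/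
open MeasureTheory Set Filter ENNReal NNReal

noncomputable section

/-- A Banach space realized as a subspace of an ambient vector space `Z`: a carrier
submodule together with a complete norm on it.  Banach couples are encoded as pairs of
such spaces inside a common ambient space. -/
structure NSpace (Z : Type*) [AddCommGroup Z] [Module ℂ Z] where
  car : Set Z
  N : Z → ℝ
  zero_mem : (0 : Z) ∈ car
  add_mem : ∀ {x y : Z}, x ∈ car → y ∈ car → x + y ∈ car
  smul_mem : ∀ (c : ℂ) {x : Z}, x ∈ car → c • x ∈ car
  nonneg : ∀ x : Z, 0 ≤ N x
  triangle : ∀ {x y : Z}, x ∈ car → y ∈ car → N (x + y) ≤ N x + N y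
  homog : ∀ (c : ℂ) {x : Z}, x ∈ car → N (c • x) = ‖c‖ * N x
  definite : ∀ {x : Z}, x ∈ car → N x = 0 → x = 0
  complete : ∀ u : ℕ → Z, (∀ n, u n ∈ car) →
    (∀ ε : ℝ, 0 < ε → ∃ n₀ : ℕ, ∀ m ≥ n₀, ∀ k ≥ n₀, N (u m - u k) < ε) →
    ∃ x ∈ car, Tendsto (fun n => N (u n - x)) atTop (nhds 0)

variable {Z : Type*} [AddCommGroup Z] [Module ℂ Z]

/-- The sum space `X₀ + X₁` of a couple, given by carriers `(C₀, C₁)`. -/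
def sumCar (C₀ C₁ : Set Z) : Set Z := {z | ∃ a ∈ C₀, ∃ b ∈ C₁, z = a + b}

/-- The norm of the sum space `X₀ + X₁` of a couple with carriers `(C₀, C₁)` and norms
`(N₀, N₁)`. -/
def sumN (C₀ : Set Z) (N₀ : Z → ℝ) (C₁ : Set Z) (N₁ : Z → ℝ) (z : Z) : ℝ :=
  sInf {r : ℝ | ∃ a ∈ C₀, ∃ b ∈ C₁, z = a + b ∧ r = N₀ a + N₁ b}

/-- `F` is an intermediate space of the couple given by carriers `(C₀, C₁)` and norms
`(N₀, N₁)`: `C₀ ∩ C₁ ⊆ F ⊆ C₀ + C₁` with continuous inclusions. -/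
def IsIntermediate (C₀ : Set Z) (N₀ : Z → ℝ) (C₁ : Set Z) (N₁ : Z → ℝ)
    (F : NSpace Z) : Prop :=
  (∃ c : ℝ, ∀ z ∈ C₀ ∩ C₁, z ∈ F.car ∧ F.N z ≤ c * max (N₀ z) (N₁ z)) ∧
  (∃ c : ℝ, ∀ z ∈ F.car, z ∈ sumCar C₀ C₁ ∧ sumN C₀ N₀ C₁ N₁ z ≤ c * F.N z)

namespace NSpace
variable {Z : Type*} [AddCommGroup Z] [Module ℂ Z] (X : NSpace Z)
lemma neg_mem' {x} (hx : x ∈ X.car) : -x ∈ X.car := by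
  rw [← neg_one_smul ℂ x]; exact X.smul_mem _ hx
lemma sub_mem' {x y} (hx : x ∈ X.car) (hy : y ∈ X.car) : x - y ∈ X.car := by
  rw [sub_eq_add_neg]; exact X.add_mem hx (X.neg_mem' hy)
lemma N_neg' {x} (hx : x ∈ X.car) : X.N (-x) = X.N x := by
  rw [← neg_one_smul ℂ x, X.homog _ hx]; simp
lemma N_sub_comm' {x y} (hx : x ∈ X.car) (hy : y ∈ X.car) : X.N (x - y) = X.N (y - x) := by
  rw [← neg_sub y x, X.N_neg' (X.sub_mem' hy hx)]
lemma N_sub_le' {x y} (hx : x ∈ X.car) (hy : y ∈ X.car) :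
    X.N (x - y) ≤ X.N x + X.N y := by
  rw [sub_eq_add_neg]
  calc X.N (x + -y) ≤ X.N x + X.N (-y) := X.triangle hx (X.neg_mem' hy)
  _ = X.N x + X.N y := by rw [X.N_neg' hy]
end NSpace

private lemma exists_linear_ext {Z : Type*} [AddCommGroup Z] [Module ℂ Z]
    (p : Submodule ℂ Z) (f : p →ₗ[ℂ] Z) :
    ∃ S : Z →ₗ[ℂ] Z, ∀ x : p, S x = f x := by
  obtain ⟨q, hq⟩ := Submodule.exists_isCompl p
  refine ⟨f ∘ₗ (p.projectionOnto q hq), fun x => ?_⟩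
  simp [Submodule.projectionOnto_apply_left]

open Classical in
private def combo {Z : Type*} [AddCommGroup Z] [Module ℂ Z]
    (C₀ C₁ : Set Z) (R₀ R₁ : Z → Z) (z : Z) : Z :=
  if h : z ∈ sumCar C₀ C₁ then R₀ h.choose + R₁ h.choose_spec.2.choose else 0

private lemma combo_eq {Z : Type*} [AddCommGroup Z] [Module ℂ Z]
    {C₀ C₁ : Set Z} {R₀ R₁ : Z → Z}
    (hwd : ∀ a ∈ C₀, ∀ b ∈ C₁, ∀ a' ∈ C₀, ∀ b' ∈ C₁, a + b = a' + b' →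
      R₀ a + R₁ b = R₀ a' + R₁ b')
    {a b : Z} (ha : a ∈ C₀) (hb : b ∈ C₁) :
    combo C₀ C₁ R₀ R₁ (a + b) = R₀ a + R₁ b := by
  have hm : a + b ∈ sumCar C₀ C₁ := ⟨a, ha, b, hb, rfl⟩
  unfold combo
  rw [dif_pos hm]
  exact hwd _ hm.choose_spec.1 _ hm.choose_spec.2.choose_spec.1 a ha b hb
    hm.choose_spec.2.choose_spec.2.symm

private lemma exists_good_ext {Z : Type*} [AddCommGroup Z] [Module ℂ Z]
    {C₀ C₁ : Set Z} {R₀ R₁ : Z → Z}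
    (h0 : (0:Z) ∈ C₀) (h1 : (0:Z) ∈ C₁)
    (hadd₀ : ∀ {x y}, x ∈ C₀ → y ∈ C₀ → x + y ∈ C₀)
    (hadd₁ : ∀ {x y}, x ∈ C₁ → y ∈ C₁ → x + y ∈ C₁)
    (hsmul₀ : ∀ (c : ℂ) {x}, x ∈ C₀ → c • x ∈ C₀)
    (hsmul₁ : ∀ (c : ℂ) {x}, x ∈ C₁ → c • x ∈ C₁)
    (hR₀add : ∀ x ∈ C₀, ∀ y ∈ C₀, R₀ (x + y) = R₀ x + R₀ y)
    (hR₁add : ∀ x ∈ C₁, ∀ y ∈ C₁, R₁ (x + y) = R₁ x + R₁ y)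
    (hR₀smul : ∀ (c : ℂ), ∀ x ∈ C₀, R₀ (c • x) = c • R₀ x)
    (hR₁smul : ∀ (c : ℂ), ∀ x ∈ C₁, R₁ (c • x) = c • R₁ x)
    (hwd : ∀ a ∈ C₀, ∀ b ∈ C₁, ∀ a' ∈ C₀, ∀ b' ∈ C₁, a + b = a' + b' →
      R₀ a + R₁ b = R₀ a' + R₁ b') :
    ∃ S : Z →ₗ[ℂ] Z, ∀ a ∈ C₀, ∀ b ∈ C₁, S (a + b) = R₀ a + R₁ b := by
  let p : Submodule ℂ Z :=
    { carrier := sumCar C₀ C₁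
      add_mem' := by
        rintro x y ⟨a, ha, b, hb, rfl⟩ ⟨a', ha', b', hb', rfl⟩
        exact ⟨a + a', hadd₀ ha ha', b + b', hadd₁ hb hb', by abel⟩
      zero_mem' := ⟨0, h0, 0, h1, by simp⟩
      smul_mem' := by
        rintro c x ⟨a, ha, b, hb, rfl⟩
        exact ⟨c • a, hsmul₀ c ha, c • b, hsmul₁ c hb, by rw [smul_add]⟩ }
  let f : p →ₗ[ℂ] Z :=
    { toFun := fun z => combo C₀ C₁ R₀ R₁ (z : Z)
      map_add' := by
        rintro ⟨x, hx⟩ ⟨y, hy⟩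
        obtain ⟨a, ha, b, hb, rfl⟩ : x ∈ sumCar C₀ C₁ := hx
        obtain ⟨a', ha', b', hb', rfl⟩ : y ∈ sumCar C₀ C₁ := hy
        show combo C₀ C₁ R₀ R₁ ((a + b) + (a' + b')) = _
        have heq : (a + b) + (a' + b') = (a + a') + (b + b') := by abel
        rw [heq, combo_eq hwd (hadd₀ ha ha') (hadd₁ hb hb')]
        show _ = combo C₀ C₁ R₀ R₁ (a + b) + combo C₀ C₁ R₀ R₁ (a' + b')
        rw [combo_eq hwd ha hb, combo_eq hwd ha' hb',
          hR₀add a ha a' ha', hR₁add b hb b' hb']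
        abel
      map_smul' := by
        rintro c ⟨x, hx⟩
        obtain ⟨a, ha, b, hb, rfl⟩ : x ∈ sumCar C₀ C₁ := hx
        show combo C₀ C₁ R₀ R₁ (c • (a + b)) = c • combo C₀ C₁ R₀ R₁ (a + b)
        rw [smul_add, combo_eq hwd (hsmul₀ c ha) (hsmul₁ c hb), combo_eq hwd ha hb,
          hR₀smul c a ha, hR₁smul c b hb, smul_add] }
  obtain ⟨S, hS⟩ := exists_linear_ext p f
  refine ⟨S, fun a ha b hb => ?_⟩
  have h := hS ⟨a + b, ⟨a, ha, b, hb, rfl⟩⟩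
  exact h.trans (combo_eq hwd ha hb)

/-- Proposition 4.1 of the paper.
Let `(X₀,X₁)` be a Banach couple (realized inside an ambient space `Z`) and let `A_j`
be a closed operator on `X_j` with domain `D_j` (`j = 0,1`), such that `A₀ = A₁` on
`D₀ ∩ D₁`, and such that for some `λ ∈ ρ(A₀) ∩ ρ(A₁)` the resolvents `(λ - A_j)⁻¹ = R_j`
coincide on `X₀ ∩ X₁`.  Let `A` be the (unique, well-defined) linear operator with
domain `D₀ + D₁ ⊆ X₀ + X₁` with `A(x₀ + x₁) = A₀x₀ + A₁x₁`.  Then for every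
interpolation functor `F` — encoded by its values `FX = F(X₀,X₁)` and
`FD = F(D_{A₀}, D_{A₁})` on the two relevant couples, together with the interpolation
property for admissible operators between them — one has: `λ ∈ ρ(A)`; the part `A_F` of
`A` in `FX` is closed; and `F(D_{A₀}, D_{A₁}) = D_{A_F}` up to equivalence of norms
(with `D_{A_F}` carrying the graph norm). -/
theorem statement17
    (X₀ X₁ : NSpace Z) (D₀ D₁ : Set Z) (A₀ A₁ A : Z → Z) (lam : ℂ)
    (hD₀ : D₀ ⊆ X₀.car) (hD₁ : D₁ ⊆ X₁.car)
    -- the `A_j` are linear operators `D_j → X_j`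
    (hA₀maps : ∀ x ∈ D₀, A₀ x ∈ X₀.car) (hA₁maps : ∀ x ∈ D₁, A₁ x ∈ X₁.car)
    (hD₀lin : ∀ x ∈ D₀, ∀ y ∈ D₀, x + y ∈ D₀ ∧ A₀ (x + y) = A₀ x + A₀ y)
    (hD₀smul : ∀ (c : ℂ), ∀ x ∈ D₀, c • x ∈ D₀ ∧ A₀ (c • x) = c • A₀ x)
    (hD₁lin : ∀ x ∈ D₁, ∀ y ∈ D₁, x + y ∈ D₁ ∧ A₁ (x + y) = A₁ x + A₁ y)
    (hD₁smul : ∀ (c : ℂ), ∀ x ∈ D₁, c • x ∈ D₁ ∧ A₁ (c • x) = c • A₁ x)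
    -- closedness of `A₀` and `A₁`
    (hA₀closed : ∀ (u : ℕ → Z) (x y : Z), (∀ n, u n ∈ D₀) → x ∈ X₀.car → y ∈ X₀.car →
      Tendsto (fun n => X₀.N (u n - x)) atTop (nhds 0) →
      Tendsto (fun n => X₀.N (A₀ (u n) - y)) atTop (nhds 0) →
      x ∈ D₀ ∧ A₀ x = y)
    (hA₁closed : ∀ (u : ℕ → Z) (x y : Z), (∀ n, u n ∈ D₁) → x ∈ X₁.car → y ∈ X₁.car →
      Tendsto (fun n => X₁.N (u n - x)) atTop (nhds 0) →
      Tendsto (fun n => X₁.N (A₁ (u n) - y)) atTop (nhds 0) →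
      x ∈ D₁ ∧ A₁ x = y)
    -- consistency of `A₀` and `A₁`
    (hcons : ∀ x, x ∈ D₀ ∩ D₁ → A₀ x = A₁ x)
    -- `λ ∈ ρ(A₀) ∩ ρ(A₁)` with consistent resolvents `R₀, R₁`
    (R₀ R₁ : Z → Z)
    (hR₀ : ∀ x ∈ X₀.car, R₀ x ∈ D₀ ∧ lam • R₀ x - A₀ (R₀ x) = x)
    (hR₀inv : ∀ d ∈ D₀, R₀ (lam • d - A₀ d) = d)
    (hR₀bdd : ∃ M : ℝ, ∀ x ∈ X₀.car, X₀.N (R₀ x) ≤ M * X₀.N x)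
    (hR₁ : ∀ x ∈ X₁.car, R₁ x ∈ D₁ ∧ lam • R₁ x - A₁ (R₁ x) = x)
    (hR₁inv : ∀ d ∈ D₁, R₁ (lam • d - A₁ d) = d)
    (hR₁bdd : ∃ M : ℝ, ∀ x ∈ X₁.car, X₁.N (R₁ x) ≤ M * X₁.N x)
    (hRcons : ∀ x ∈ X₀.car ∩ X₁.car, R₀ x = R₁ x)
    -- the sum operator `A` on `D₀ + D₁`
    (hA : ∀ a ∈ D₀, ∀ b ∈ D₁, A (a + b) = A₀ a + A₁ b)
    -- the interpolation functor `F`, through its values on the two couples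
    (FX FD : NSpace Z)
    (hFXmid : IsIntermediate X₀.car X₀.N X₁.car X₁.N FX)
    (hFDmid : IsIntermediate D₀ (fun z => X₀.N z + X₀.N (A₀ z))
      D₁ (fun z => X₁.N z + X₁.N (A₁ z)) FD)
    -- interpolation property: admissible operators `(X₀,X₁) → (D_{A₀},D_{A₁})`
    (hFinterp₁ : ∀ (S : Z →ₗ[ℂ] Z),
      (∃ M : ℝ, ∀ a ∈ X₀.car, S a ∈ D₀ ∧
          X₀.N (S a) + X₀.N (A₀ (S a)) ≤ M * X₀.N a) →
      (∃ M : ℝ, ∀ b ∈ X₁.car, S b ∈ D₁ ∧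
          X₁.N (S b) + X₁.N (A₁ (S b)) ≤ M * X₁.N b) →
      ∃ M' : ℝ, ∀ z ∈ FX.car, S z ∈ FD.car ∧ FD.N (S z) ≤ M' * FX.N z)
    -- interpolation property: admissible operators `(D_{A₀},D_{A₁}) → (X₀,X₁)`
    (hFinterp₂ : ∀ (S : Z →ₗ[ℂ] Z),
      (∃ M : ℝ, ∀ a ∈ D₀, S a ∈ X₀.car ∧
          X₀.N (S a) ≤ M * (X₀.N a + X₀.N (A₀ a))) →
      (∃ M : ℝ, ∀ b ∈ D₁, S b ∈ X₁.car ∧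
          X₁.N (S b) ≤ M * (X₁.N b + X₁.N (A₁ b))) →
      ∃ M' : ℝ, ∀ z ∈ FD.car, S z ∈ FX.car ∧ FX.N (S z) ≤ M' * FD.N z) :
    -- `λ ∈ ρ(A)` on `X₀ + X₁`
    ((∀ z ∈ sumCar X₀.car X₁.car, ∃ d, d ∈ {d' | ∃ a ∈ D₀, ∃ b ∈ D₁, d' = a + b} ∧
        lam • d - A d = z ∧
        ∀ d' ∈ {d'' | ∃ a ∈ D₀, ∃ b ∈ D₁, d'' = a + b},
          lam • d' - A d' = z → d' = d) ∧
      (∃ c : ℝ, ∀ d ∈ {d' | ∃ a ∈ D₀, ∃ b ∈ D₁, d' = a + b},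
        sumN X₀.car X₀.N X₁.car X₁.N d ≤ c * sumN X₀.car X₀.N X₁.car X₁.N (lam • d - A d))) ∧
    -- the part `A_F` of `A` in `FX` is closed
    (∀ (u : ℕ → Z) (x y : Z),
      (∀ n, u n ∈ FX.car ∧ (∃ a ∈ D₀, ∃ b ∈ D₁, u n = a + b) ∧ A (u n) ∈ FX.car) →
      x ∈ FX.car → y ∈ FX.car →
      Tendsto (fun n => FX.N (u n - x)) atTop (nhds 0) →
      Tendsto (fun n => FX.N (A (u n) - y)) atTop (nhds 0) →
      (∃ a ∈ D₀, ∃ b ∈ D₁, x = a + b) ∧ A x = y) ∧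
    -- `F(D_{A₀}, D_{A₁}) = D_{A_F}` with equivalence of (graph) norms
    ((∀ z : Z, z ∈ FD.car ↔
        (z ∈ FX.car ∧ (∃ a ∈ D₀, ∃ b ∈ D₁, z = a + b) ∧ A z ∈ FX.car)) ∧
      ∃ c : ℝ, 0 < c ∧ ∀ z ∈ FD.car,
        FD.N z ≤ c * (FX.N z + FX.N (A z)) ∧
        FX.N z + FX.N (A z) ≤ c * FD.N z) := by
  classical
  obtain ⟨M₀', hM₀'⟩ := hR₀bdd
  obtain ⟨M₁', hM₁'⟩ := hR₁bdd
  set M₀ : ℝ := max M₀' 0 with hM₀def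
  set M₁ : ℝ := max M₁' 0 with hM₁def
  have hM₀0 : (0:ℝ) ≤ M₀ := le_max_right _ _
  have hM₁0 : (0:ℝ) ≤ M₁ := le_max_right _ _
  have hM₀ : ∀ x ∈ X₀.car, X₀.N (R₀ x) ≤ M₀ * X₀.N x := fun x hx =>
    le_trans (hM₀' x hx) (mul_le_mul_of_nonneg_right (le_max_left _ _) (X₀.nonneg x))
  have hM₁ : ∀ x ∈ X₁.car, X₁.N (R₁ x) ≤ M₁ * X₁.N x := fun x hx =>
    le_trans (hM₁' x hx) (mul_le_mul_of_nonneg_right (le_max_left _ _) (X₁.nonneg x))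
  -- zero in domains
  have h0D₀ : (0 : Z) ∈ D₀ ∧ A₀ 0 = 0 := by
    have h := (hR₀ 0 X₀.zero_mem).1
    simpa using hD₀smul 0 _ h
  have h0D₁ : (0 : Z) ∈ D₁ ∧ A₁ 0 = 0 := by
    have h := (hR₁ 0 X₁.zero_mem).1
    simpa using hD₁smul 0 _ h
  have hD₀neg : ∀ x ∈ D₀, -x ∈ D₀ ∧ A₀ (-x) = -A₀ x := by
    intro x hx; simpa using hD₀smul (-1) x hx
  have hD₁neg : ∀ x ∈ D₁, -x ∈ D₁ ∧ A₁ (-x) = -A₁ x := by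
    intro x hx; simpa using hD₁smul (-1) x hx
  have hD₀sub : ∀ x ∈ D₀, ∀ y ∈ D₀, x - y ∈ D₀ ∧ A₀ (x - y) = A₀ x - A₀ y := by
    intro x hx y hy
    have h1 := hD₀neg y hy
    have h2 := hD₀lin x hx _ h1.1
    rw [← sub_eq_add_neg] at h2
    exact ⟨h2.1, by rw [h2.2, h1.2, ← sub_eq_add_neg]⟩
  have hD₁sub : ∀ x ∈ D₁, ∀ y ∈ D₁, x - y ∈ D₁ ∧ A₁ (x - y) = A₁ x - A₁ y := by
    intro x hx y hy
    have h1 := hD₁neg y hy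
    have h2 := hD₁lin x hx _ h1.1
    rw [← sub_eq_add_neg] at h2
    exact ⟨h2.1, by rw [h2.2, h1.2, ← sub_eq_add_neg]⟩
  -- resolvents are linear
  have hR₀add : ∀ x ∈ X₀.car, ∀ y ∈ X₀.car, R₀ (x + y) = R₀ x + R₀ y := by
    intro x hx y hy
    have hdx := hR₀ x hx
    have hdy := hR₀ y hy
    have hd := hD₀lin _ hdx.1 _ hdy.1
    have key : lam • (R₀ x + R₀ y) - A₀ (R₀ x + R₀ y) = x + y := by
      rw [hd.2]
      calc lam • (R₀ x + R₀ y) - (A₀ (R₀ x) + A₀ (R₀ y))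
          = (lam • R₀ x - A₀ (R₀ x)) + (lam • R₀ y - A₀ (R₀ y)) := by module
        _ = x + y := by rw [hdx.2, hdy.2]
    rw [← key]
    exact hR₀inv _ hd.1
  have hR₁add : ∀ x ∈ X₁.car, ∀ y ∈ X₁.car, R₁ (x + y) = R₁ x + R₁ y := by
    intro x hx y hy
    have hdx := hR₁ x hx
    have hdy := hR₁ y hy
    have hd := hD₁lin _ hdx.1 _ hdy.1
    have key : lam • (R₁ x + R₁ y) - A₁ (R₁ x + R₁ y) = x + y := by
      rw [hd.2]
      calc lam • (R₁ x + R₁ y) - (A₁ (R₁ x) + A₁ (R₁ y))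
          = (lam • R₁ x - A₁ (R₁ x)) + (lam • R₁ y - A₁ (R₁ y)) := by module
        _ = x + y := by rw [hdx.2, hdy.2]
    rw [← key]
    exact hR₁inv _ hd.1
  have hR₀smul : ∀ (c : ℂ), ∀ x ∈ X₀.car, R₀ (c • x) = c • R₀ x := by
    intro c x hx
    have hdx := hR₀ x hx
    have hd := hD₀smul c _ hdx.1
    have key : lam • (c • R₀ x) - A₀ (c • R₀ x) = c • x := by
      rw [hd.2]
      calc lam • (c • R₀ x) - c • A₀ (R₀ x)
          = c • (lam • R₀ x - A₀ (R₀ x)) := by module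
        _ = c • x := by rw [hdx.2]
    rw [← key]
    exact hR₀inv _ hd.1
  have hR₁smul : ∀ (c : ℂ), ∀ x ∈ X₁.car, R₁ (c • x) = c • R₁ x := by
    intro c x hx
    have hdx := hR₁ x hx
    have hd := hD₁smul c _ hdx.1
    have key : lam • (c • R₁ x) - A₁ (c • R₁ x) = c • x := by
      rw [hd.2]
      calc lam • (c • R₁ x) - c • A₁ (R₁ x)
          = c • (lam • R₁ x - A₁ (R₁ x)) := by module
        _ = c • x := by rw [hdx.2]
    rw [← key]
    exact hR₁inv _ hd.1
  have hR₀zero : R₀ (0 : Z) = 0 := by simpa using hR₀smul 0 0 X₀.zero_mem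
  have hR₁zero : R₁ (0 : Z) = 0 := by simpa using hR₁smul 0 0 X₁.zero_mem
  -- well-definedness of the sum resolvent and sum operator
  have hRwd : ∀ a ∈ X₀.car, ∀ b ∈ X₁.car, ∀ a' ∈ X₀.car, ∀ b' ∈ X₁.car,
      a + b = a' + b' → R₀ a + R₁ b = R₀ a' + R₁ b' := by
    intro a ha b hb a' ha' b' hb' heq
    have hw0 : a - a' ∈ X₀.car := X₀.sub_mem' ha ha'
    have hweq : a - a' = b' - b := by
      rw [sub_eq_sub_iff_add_eq_add, heq]; exact add_comm _ _
    have hw1 : a - a' ∈ X₁.car := by rw [hweq]; exact X₁.sub_mem' hb' hb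
    have h1 : R₀ a = R₀ a' + R₀ (a - a') := by
      rw [← hR₀add a' ha' _ hw0]; congr 1; abel
    have h2 : R₁ b' = R₁ b + R₁ (a - a') := by
      rw [← hR₁add b hb _ hw1]; congr 1; rw [hweq]; abel
    rw [h1, hRcons _ ⟨hw0, hw1⟩, h2]; abel
  have hAwd : ∀ a ∈ D₀, ∀ b ∈ D₁, ∀ a' ∈ D₀, ∀ b' ∈ D₁,
      a + b = a' + b' → A₀ a + A₁ b = A₀ a' + A₁ b' := by
    intro a ha b hb a' ha' b' hb' heq
    have hw0 : a - a' ∈ D₀ := (hD₀sub a ha a' ha').1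
    have hweq : a - a' = b' - b := by
      rw [sub_eq_sub_iff_add_eq_add, heq]; exact add_comm _ _
    have hw1 : a - a' ∈ D₁ := by rw [hweq]; exact (hD₁sub b' hb' b hb).1
    have h1 : A₀ a - A₀ a' = A₁ b' - A₁ b := by
      rw [← (hD₀sub a ha a' ha').2, hcons _ ⟨hw0, hw1⟩, hweq, (hD₁sub b' hb' b hb).2]
    calc A₀ a + A₁ b = (A₀ a - A₀ a') + A₀ a' + A₁ b := by abel
      _ = (A₁ b' - A₁ b) + A₀ a' + A₁ b := by rw [h1]
      _ = A₀ a' + A₁ b' := by abel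
  -- the linear extensions
  obtain ⟨SR, hSR⟩ := exists_good_ext X₀.zero_mem X₁.zero_mem
    (fun {x y} hx hy => X₀.add_mem hx hy) (fun {x y} hx hy => X₁.add_mem hx hy)
    (fun c {x} hx => X₀.smul_mem c hx) (fun c {x} hx => X₁.smul_mem c hx)
    hR₀add hR₁add hR₀smul hR₁smul hRwd
  obtain ⟨SA, hSA⟩ := exists_good_ext h0D₀.1 h0D₁.1
    (fun {x y} hx hy => (hD₀lin _ hx _ hy).1) (fun {x y} hx hy => (hD₁lin _ hx _ hy).1)
    (fun c {x} hx => (hD₀smul c _ hx).1) (fun c {x} hx => (hD₁smul c _ hx).1)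
    (fun x hx y hy => (hD₀lin x hx y hy).2) (fun x hx y hy => (hD₁lin x hx y hy).2)
    (fun c x hx => (hD₀smul c x hx).2) (fun c x hx => (hD₁smul c x hx).2) hAwd
  have hSR₀ : ∀ a ∈ X₀.car, SR a = R₀ a := by
    intro a ha
    have h := hSR a ha 0 X₁.zero_mem
    rw [add_zero] at h
    rw [h, hR₁zero, add_zero]
  have hSR₁ : ∀ b ∈ X₁.car, SR b = R₁ b := by
    intro b hb
    have h := hSR 0 X₀.zero_mem b hb
    rw [zero_add] at h
    rw [h, hR₀zero, zero_add]
  have hSA₀ : ∀ a ∈ D₀, SA a = A₀ a := by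
    intro a ha
    have h := hSA a ha 0 h0D₁.1
    rw [add_zero] at h
    rw [h, h0D₁.2, add_zero]
  have hSA₁ : ∀ b ∈ D₁, SA b = A₁ b := by
    intro b hb
    have h := hSA 0 h0D₀.1 b hb
    rw [zero_add] at h
    rw [h, h0D₀.2, zero_add]
  -- basic identities
  have hgraph : ∀ (a b : Z), lam • (a + b) - (A₀ a + A₁ b)
      = (lam • a - A₀ a) + (lam • b - A₁ b) := by
    intro a b; rw [smul_add]; abel
  have hA₀R₀ : ∀ x ∈ X₀.car, A₀ (R₀ x) = lam • R₀ x - x := by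
    intro x hx
    have h := (hR₀ x hx).2
    have e : A₀ (R₀ x) = lam • R₀ x - (lam • R₀ x - A₀ (R₀ x)) := by abel
    rw [e, h]
  have hA₁R₁ : ∀ x ∈ X₁.car, A₁ (R₁ x) = lam • R₁ x - x := by
    intro x hx
    have h := (hR₁ x hx).2
    have e : A₁ (R₁ x) = lam • R₁ x - (lam • R₁ x - A₁ (R₁ x)) := by abel
    rw [e, h]
  -- injectivity of lam - A on D₀ + D₁
  have hinj : ∀ a ∈ D₀, ∀ b ∈ D₁, lam • (a + b) - (A₀ a + A₁ b) = 0 → a + b = 0 := by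
    intro a ha b hb h0
    rw [hgraph a b] at h0
    have hwX₀ : lam • a - A₀ a ∈ X₀.car :=
      X₀.sub_mem' (X₀.smul_mem _ (hD₀ ha)) (hA₀maps a ha)
    have hwneg : lam • b - A₁ b = -(lam • a - A₀ a) := by
      rw [← zero_sub, ← h0]; abel
    have hwX₁ : lam • a - A₀ a ∈ X₁.car := by
      have e : lam • a - A₀ a = -(lam • b - A₁ b) := by rw [hwneg, neg_neg]
      rw [e]
      exact X₁.neg_mem' (X₁.sub_mem' (X₁.smul_mem _ (hD₁ hb)) (hA₁maps b hb))
    have ha' : a = R₀ (lam • a - A₀ a) := (hR₀inv a ha).symm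
    have hb' : b = R₁ (lam • b - A₁ b) := (hR₁inv b hb).symm
    rw [ha', hb', hwneg, ← neg_one_smul ℂ (lam • a - A₀ a), hR₁smul (-1) _ hwX₁,
      ← hRcons _ ⟨hwX₀, hwX₁⟩, neg_one_smul]
    abel
  -- uniqueness of solutions
  have huniq : ∀ a ∈ D₀, ∀ b ∈ D₁, ∀ x₀ ∈ X₀.car, ∀ x₁ ∈ X₁.car,
      lam • (a + b) - (A₀ a + A₁ b) = x₀ + x₁ → a + b = R₀ x₀ + R₁ x₁ := by
    intro a ha b hb x₀ hx₀ x₁ hx₁ heq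
    have hr₀ := hR₀ x₀ hx₀
    have hr₁ := hR₁ x₁ hx₁
    have hzero : lam • ((a - R₀ x₀) + (b - R₁ x₁))
        - (A₀ (a - R₀ x₀) + A₁ (b - R₁ x₁)) = 0 := by
      rw [(hD₀sub a ha _ hr₀.1).2, (hD₁sub b hb _ hr₁.1).2]
      calc lam • ((a - R₀ x₀) + (b - R₁ x₁)) - ((A₀ a - A₀ (R₀ x₀)) + (A₁ b - A₁ (R₁ x₁)))
          = (lam • (a + b) - (A₀ a + A₁ b))
            - ((lam • R₀ x₀ - A₀ (R₀ x₀)) + (lam • R₁ x₁ - A₁ (R₁ x₁))) := by module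
        _ = 0 := by rw [heq, hr₀.2, hr₁.2]; exact sub_self _
    have hkey := hinj _ (hD₀sub a ha _ hr₀.1).1 _ (hD₁sub b hb _ hr₁.1).1 hzero
    have h2 : a + b - (R₀ x₀ + R₁ x₁) = 0 := by
      rw [show a + b - (R₀ x₀ + R₁ x₁) = (a - R₀ x₀) + (b - R₁ x₁) from by abel, hkey]
    exact sub_eq_zero.mp h2
  have hSRsolve : ∀ a ∈ D₀, ∀ b ∈ D₁, SR (lam • (a + b) - (A₀ a + A₁ b)) = a + b := by
    intro a ha b hb
    rw [hgraph a b, hSR _ (X₀.sub_mem' (X₀.smul_mem _ (hD₀ ha)) (hA₀maps a ha))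
      _ (X₁.sub_mem' (X₁.smul_mem _ (hD₁ hb)) (hA₁maps b hb)), hR₀inv a ha, hR₁inv b hb]
  have hsumN_le : ∀ x₀ ∈ X₀.car, ∀ x₁ ∈ X₁.car,
      sumN X₀.car X₀.N X₁.car X₁.N (x₀ + x₁) ≤ X₀.N x₀ + X₁.N x₁ := by
    intro x₀ hx₀ x₁ hx₁
    apply csInf_le
    · refine ⟨0, ?_⟩
      rintro r ⟨u, hu, v, hv, -, rfl⟩
      exact add_nonneg (X₀.nonneg u) (X₁.nonneg v)
    · exact ⟨x₀, hx₀, x₁, hx₁, rfl, rfl⟩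
  -- interpolation applications
  obtain ⟨cD, hcD⟩ := hFDmid.2
  obtain ⟨cX, hcX⟩ := hFXmid.2
  obtain ⟨Mi', hMi'⟩ := hFinterp₂ LinearMap.id
    ⟨1, fun a ha => ⟨hD₀ ha, by
      simp only [LinearMap.id_coe, id_eq, one_mul]
      linarith [X₀.nonneg (A₀ a)]⟩⟩
    ⟨1, fun b hb => ⟨hD₁ hb, by
      simp only [LinearMap.id_coe, id_eq, one_mul]
      linarith [X₁.nonneg (A₁ b)]⟩⟩
  set Mi : ℝ := max Mi' 0 with hMidef
  have hMi0 : (0:ℝ) ≤ Mi := le_max_right _ _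
  have hMi : ∀ z ∈ FD.car, z ∈ FX.car ∧ FX.N z ≤ Mi * FD.N z := by
    intro z hz
    have h := hMi' z hz
    simp only [LinearMap.id_coe, id_eq] at h
    exact ⟨h.1, le_trans h.2 (mul_le_mul_of_nonneg_right (le_max_left _ _) (FD.nonneg z))⟩
  obtain ⟨Ma', hMa'⟩ := hFinterp₂ SA
    ⟨1, fun a ha => ⟨by rw [hSA₀ a ha]; exact hA₀maps a ha, by
      rw [hSA₀ a ha, one_mul]; linarith [X₀.nonneg a]⟩⟩
    ⟨1, fun b hb => ⟨by rw [hSA₁ b hb]; exact hA₁maps b hb, by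
      rw [hSA₁ b hb, one_mul]; linarith [X₁.nonneg b]⟩⟩
  set Ma : ℝ := max Ma' 0 with hMadef
  have hMa0 : (0:ℝ) ≤ Ma := le_max_right _ _
  have hMa : ∀ z ∈ FD.car, SA z ∈ FX.car ∧ FX.N (SA z) ≤ Ma * FD.N z := fun z hz =>
    ⟨(hMa' z hz).1,
      le_trans (hMa' z hz).2 (mul_le_mul_of_nonneg_right (le_max_left _ _) (FD.nonneg z))⟩
  have hgr₀ : ∀ a ∈ X₀.car,
      X₀.N (SR a) + X₀.N (A₀ (SR a)) ≤ (M₀ + (‖lam‖ * M₀ + 1)) * X₀.N a := by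
    intro a ha
    rw [hSR₀ a ha]
    have h1 : X₀.N (R₀ a) ≤ M₀ * X₀.N a := hM₀ a ha
    have h2 : X₀.N (A₀ (R₀ a)) ≤ ‖lam‖ * (M₀ * X₀.N a) + X₀.N a := by
      rw [hA₀R₀ a ha]
      refine le_trans (X₀.N_sub_le' (X₀.smul_mem _ (hD₀ (hR₀ a ha).1)) ha) ?_
      rw [X₀.homog _ (hD₀ (hR₀ a ha).1)]
      have := mul_le_mul_of_nonneg_left h1 (norm_nonneg lam)
      linarith
    nlinarith [X₀.nonneg a]
  have hgr₁ : ∀ b ∈ X₁.car,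
      X₁.N (SR b) + X₁.N (A₁ (SR b)) ≤ (M₁ + (‖lam‖ * M₁ + 1)) * X₁.N b := by
    intro b hb
    rw [hSR₁ b hb]
    have h1 : X₁.N (R₁ b) ≤ M₁ * X₁.N b := hM₁ b hb
    have h2 : X₁.N (A₁ (R₁ b)) ≤ ‖lam‖ * (M₁ * X₁.N b) + X₁.N b := by
      rw [hA₁R₁ b hb]
      refine le_trans (X₁.N_sub_le' (X₁.smul_mem _ (hD₁ (hR₁ b hb).1)) hb) ?_
      rw [X₁.homog _ (hD₁ (hR₁ b hb).1)]
      have := mul_le_mul_of_nonneg_left h1 (norm_nonneg lam)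
      linarith
    nlinarith [X₁.nonneg b]
  obtain ⟨Mr', hMr'⟩ := hFinterp₁ SR
    ⟨_, fun a ha => ⟨by rw [hSR₀ a ha]; exact (hR₀ a ha).1, hgr₀ a ha⟩⟩
    ⟨_, fun b hb => ⟨by rw [hSR₁ b hb]; exact (hR₁ b hb).1, hgr₁ b hb⟩⟩
  set Mr : ℝ := max Mr' 0 with hMrdef
  have hMr0 : (0:ℝ) ≤ Mr := le_max_right _ _
  have hMr : ∀ z ∈ FX.car, SR z ∈ FD.car ∧ FD.N (SR z) ≤ Mr * FX.N z := fun z hz =>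
    ⟨(hMr' z hz).1,
      le_trans (hMr' z hz).2 (mul_le_mul_of_nonneg_right (le_max_left _ _) (FX.nonneg z))⟩
  have hASA : ∀ z ∈ sumCar D₀ D₁, A z = SA z := by
    rintro z ⟨a, ha, b, hb, rfl⟩
    rw [hA a ha b hb, hSA a ha b hb]
  -- the two inclusions for part 3
  have hfwd : ∀ z ∈ FD.car, z ∈ FX.car ∧ (∃ a ∈ D₀, ∃ b ∈ D₁, z = a + b) ∧
      A z ∈ FX.car ∧ FX.N z + FX.N (A z) ≤ (Mi + Ma) * FD.N z := by
    intro z hz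
    have hzs : z ∈ sumCar D₀ D₁ := (hcD z hz).1
    have h1 := hMi z hz
    have h2 := hMa z hz
    have hAz : A z = SA z := hASA z hzs
    refine ⟨h1.1, hzs, by rw [hAz]; exact h2.1, ?_⟩
    rw [hAz, add_mul]
    exact add_le_add h1.2 h2.2
  have hback : ∀ z, z ∈ FX.car → (∃ a ∈ D₀, ∃ b ∈ D₁, z = a + b) → A z ∈ FX.car →
      z ∈ FD.car ∧ FD.N z ≤ Mr * (‖lam‖ + 1) * (FX.N z + FX.N (A z)) := by
    rintro z hzF ⟨a, ha, b, hb, rfl⟩ hAz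
    have hAzeq : A (a + b) = A₀ a + A₁ b := hA a ha b hb
    have hwF : lam • (a + b) - A (a + b) ∈ FX.car := FX.sub_mem' (FX.smul_mem _ hzF) hAz
    have h1 := hMr _ hwF
    have h2 : SR (lam • (a + b) - A (a + b)) = a + b := by
      rw [hAzeq]; exact hSRsolve a ha b hb
    rw [h2] at h1
    refine ⟨h1.1, le_trans h1.2 ?_⟩
    have h3 : FX.N (lam • (a + b) - A (a + b)) ≤ ‖lam‖ * FX.N (a + b) + FX.N (A (a + b)) := by
      refine le_trans (FX.N_sub_le' (FX.smul_mem _ hzF) hAz) ?_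
      rw [FX.homog _ hzF]
    calc Mr * FX.N (lam • (a + b) - A (a + b))
        ≤ Mr * (‖lam‖ * FX.N (a + b) + FX.N (A (a + b))) := mul_le_mul_of_nonneg_left h3 hMr0
      _ ≤ Mr * (‖lam‖ + 1) * (FX.N (a + b) + FX.N (A (a + b))) := by
          nlinarith [mul_nonneg hMr0 (FX.nonneg (a + b)),
            mul_nonneg (mul_nonneg hMr0 (norm_nonneg lam)) (FX.nonneg (A (a + b)))]
  have hC : ∀ v ∈ FX.car, SR v ∈ FX.car ∧ FX.N (SR v) ≤ Mi * Mr * FX.N v := by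
    intro v hv
    have h1 := hMr v hv
    have h2 := hMi _ h1.1
    refine ⟨h2.1, le_trans h2.2 ?_⟩
    rw [mul_assoc]
    exact mul_le_mul_of_nonneg_left h1.2 hMi0
  -- assemble
  refine ⟨⟨?_, ?_⟩, ?_, ?_, ?_⟩
  · -- existence and uniqueness of resolvent on the sum space
    rintro z ⟨x₀, hx₀, x₁, hx₁, rfl⟩
    refine ⟨R₀ x₀ + R₁ x₁, ⟨R₀ x₀, (hR₀ x₀ hx₀).1, R₁ x₁, (hR₁ x₁ hx₁).1, rfl⟩, ?_, ?_⟩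
    · rw [hA _ (hR₀ x₀ hx₀).1 _ (hR₁ x₁ hx₁).1, hgraph, (hR₀ x₀ hx₀).2, (hR₁ x₁ hx₁).2]
    · rintro d' ⟨a', ha', b', hb', rfl⟩ heq
      rw [hA a' ha' b' hb'] at heq
      exact huniq a' ha' b' hb' x₀ hx₀ x₁ hx₁ heq
  · -- boundedness of the resolvent on the sum space
    refine ⟨max (max M₀ M₁) 1, ?_⟩
    rintro d ⟨a, ha, b, hb, rfl⟩
    have hc1 : (0:ℝ) < max (max M₀ M₁) 1 := lt_of_lt_of_le one_pos (le_max_right _ _)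
    rw [hA a ha b hb]
    have hSne : Set.Nonempty {r : ℝ | ∃ u ∈ X₀.car, ∃ v ∈ X₁.car,
        lam • (a + b) - (A₀ a + A₁ b) = u + v ∧ r = X₀.N u + X₁.N v} :=
      ⟨_, lam • a - A₀ a, X₀.sub_mem' (X₀.smul_mem _ (hD₀ ha)) (hA₀maps a ha),
        lam • b - A₁ b, X₁.sub_mem' (X₁.smul_mem _ (hD₁ hb)) (hA₁maps b hb), hgraph a b, rfl⟩
    have hkey : ∀ r ∈ {r : ℝ | ∃ u ∈ X₀.car, ∃ v ∈ X₁.car,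
        lam • (a + b) - (A₀ a + A₁ b) = u + v ∧ r = X₀.N u + X₁.N v},
        sumN X₀.car X₀.N X₁.car X₁.N (a + b) / max (max M₀ M₁) 1 ≤ r := by
      rintro r ⟨u, hu, v, hv, hzeq, rfl⟩
      have hd' : a + b = R₀ u + R₁ v := huniq a ha b hb u hu v hv hzeq
      rw [div_le_iff₀ hc1]
      calc sumN X₀.car X₀.N X₁.car X₁.N (a + b)
          = sumN X₀.car X₀.N X₁.car X₁.N (R₀ u + R₁ v) := by rw [hd']
        _ ≤ X₀.N (R₀ u) + X₁.N (R₁ v) :=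
            hsumN_le _ (hD₀ (hR₀ u hu).1) _ (hD₁ (hR₁ v hv).1)
        _ ≤ M₀ * X₀.N u + M₁ * X₁.N v := add_le_add (hM₀ u hu) (hM₁ v hv)
        _ ≤ (X₀.N u + X₁.N v) * max (max M₀ M₁) 1 := by
            have h1 : M₀ ≤ max (max M₀ M₁) 1 := le_trans (le_max_left _ _) (le_max_left _ _)
            have h2 : M₁ ≤ max (max M₀ M₁) 1 := le_trans (le_max_right _ _) (le_max_left _ _)
            nlinarith [X₀.nonneg u, X₁.nonneg v]
    have hfin : sumN X₀.car X₀.N X₁.car X₁.N (a + b) / max (max M₀ M₁) 1 ≤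
        sumN X₀.car X₀.N X₁.car X₁.N (lam • (a + b) - (A₀ a + A₁ b)) :=
      le_csInf hSne hkey
    rw [div_le_iff₀ hc1] at hfin
    rw [mul_comm]
    exact hfin
  · -- closedness of the part of A in FX
    intro u x y hu hx hy hux hAuy
    have hwF : lam • x - y ∈ FX.car := FX.sub_mem' (FX.smul_mem _ hx) hy
    have hSRwF : SR (lam • x - y) ∈ FX.car := (hC _ hwF).1
    have hun : ∀ n, u n = SR (lam • u n - A (u n)) := by
      intro n
      obtain ⟨-, ⟨a, ha, b, hb, hab⟩, -⟩ := hu n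
      rw [hab, hA a ha b hb]
      exact (hSRsolve a ha b hb).symm
    have hest : ∀ n, FX.N (u n - SR (lam • x - y)) ≤
        Mi * Mr * (‖lam‖ * FX.N (u n - x) + FX.N (A (u n) - y)) := by
      intro n
      have hdiff : u n - SR (lam • x - y) = SR ((lam • u n - A (u n)) - (lam • x - y)) := by
        rw [map_sub SR (lam • u n - A (u n)) (lam • x - y), ← hun n]
      have hvn : lam • u n - A (u n) ∈ FX.car :=
        FX.sub_mem' (FX.smul_mem _ (hu n).1) (hu n).2.2
      have hmem : (lam • u n - A (u n)) - (lam • x - y) ∈ FX.car := FX.sub_mem' hvn hwF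
      rw [hdiff]
      refine le_trans (hC _ hmem).2 (mul_le_mul_of_nonneg_left ?_ (mul_nonneg hMi0 hMr0))
      have heq2 : (lam • u n - A (u n)) - (lam • x - y) = lam • (u n - x) - (A (u n) - y) := by
        module
      rw [heq2]
      refine le_trans (FX.N_sub_le' (FX.smul_mem _ (FX.sub_mem' (hu n).1 hx))
        (FX.sub_mem' (hu n).2.2 hy)) ?_
      rw [FX.homog _ (FX.sub_mem' (hu n).1 hx)]
    have hlim : Tendsto (fun n => FX.N (u n - SR (lam • x - y))) atTop (nhds 0) := by
      have hg : Tendsto (fun n => Mi * Mr * (‖lam‖ * FX.N (u n - x) + FX.N (A (u n) - y)))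
          atTop (nhds 0) := by
        have := ((hux.const_mul ‖lam‖).add hAuy).const_mul (Mi * Mr)
        simpa using this
      exact squeeze_zero (fun n => FX.nonneg _) hest hg
    have hxw : x = SR (lam • x - y) := by
      have hxu : Tendsto (fun n => FX.N (x - u n)) atTop (nhds 0) := by
        have he : (fun n => FX.N (x - u n)) = fun n => FX.N (u n - x) := by
          funext n; exact FX.N_sub_comm' hx (hu n).1
        rw [he]; exact hux
      have h0 : Tendsto (fun n => FX.N (x - u n) + FX.N (u n - SR (lam • x - y)))
          atTop (nhds 0) := by
        simpa using hxu.add hlim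
      have hle : FX.N (x - SR (lam • x - y)) ≤ 0 := by
        refine ge_of_tendsto' h0 fun n => ?_
        have heq3 : x - SR (lam • x - y) = (x - u n) + (u n - SR (lam • x - y)) := by abel
        rw [heq3]
        exact FX.triangle (FX.sub_mem' hx (hu n).1) (FX.sub_mem' (hu n).1 hSRwF)
      have h00 : FX.N (x - SR (lam • x - y)) = 0 := le_antisymm hle (FX.nonneg _)
      exact sub_eq_zero.mp (FX.definite (FX.sub_mem' hx hSRwF) h00)
    have hwsum : lam • x - y ∈ sumCar X₀.car X₁.car := (hcX _ hwF).1
    obtain ⟨w₀, hw₀, w₁, hw₁, hwdec⟩ := hwsum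
    have hSRw : SR (lam • x - y) = R₀ w₀ + R₁ w₁ := by
      rw [hwdec]; exact hSR w₀ hw₀ w₁ hw₁
    have hx2 : x = R₀ w₀ + R₁ w₁ := by rw [hxw, hSRw]
    refine ⟨⟨R₀ w₀, (hR₀ w₀ hw₀).1, R₁ w₁, (hR₁ w₁ hw₁).1, hx2⟩, ?_⟩
    have hAx : A x = A₀ (R₀ w₀) + A₁ (R₁ w₁) := by
      rw [hx2]; exact hA _ (hR₀ w₀ hw₀).1 _ (hR₁ w₁ hw₁).1
    have h3 : lam • x - A x = lam • x - y := by
      rw [hAx]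
      calc lam • x - (A₀ (R₀ w₀) + A₁ (R₁ w₁))
          = lam • (R₀ w₀ + R₁ w₁) - (A₀ (R₀ w₀) + A₁ (R₁ w₁)) := by rw [← hx2]
        _ = w₀ + w₁ := by rw [hgraph, (hR₀ w₀ hw₀).2, (hR₁ w₁ hw₁).2]
        _ = lam • x - y := hwdec.symm
    have e : A x = lam • x - (lam • x - A x) := by abel
    rw [e, h3]
    abel
  · -- carrier equality
    intro z
    constructor
    · intro hz
      obtain ⟨h1, h2, h3, -⟩ := hfwd z hz
      exact ⟨h1, h2, h3⟩
    · rintro ⟨h1, h2, h3⟩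
      exact (hback z h1 h2 h3).1
  · -- norm equivalence
    refine ⟨max (max (Mi + Ma) (Mr * (‖lam‖ + 1))) 1,
      lt_of_lt_of_le one_pos (le_max_right _ _), ?_⟩
    intro z hz
    obtain ⟨h1, h2, h3, h4⟩ := hfwd z hz
    have h5 := (hback z h1 h2 h3).2
    constructor
    · refine le_trans h5 (mul_le_mul_of_nonneg_right
        (le_trans (le_max_right _ _) (le_max_left _ _)) ?_)
      exact add_nonneg (FX.nonneg _) (FX.nonneg _)
    · exact le_trans h4 (mul_le_mul_of_nonneg_right
        (le_trans (le_max_left _ _) (le_max_left _ _)) (FD.nonneg z))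
end
end
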